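/- arXiv:2401.14385 — 3 statements merged into one kernel-verified Lean document; each statement's English description precedes it below -/
import Mathlib

section
/- Trace-distance quantum CLT: for every n-qudit state ρ with zero mean (d an odd prime) and every N ≥ 1, ‖⊠^N ρ − M(ρ)‖₁ ≤ √2 · (1 − MG(ρ))^{N−1} · √(Tr(ρ²)·R(ρ) − 1). -/
open scoped BigOperators ENNReal
open Classical Matrix ComplexOrder

noncomputable section

namespace QW

/-- The computational-basis index set of an `n`-qudit system: `ℤ_d^n`. -/
abbrev Idx (d n : ℕ) := Fin n → ZMod d

/-- Linear operators (matrices) on `(ℂ^d)^{⊗ n}`. -/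
abbrev Mat (d n : ℕ) := Matrix (Idx d n) (Idx d n) ℂ

/-- The phase space `V^n = ℤ_d^n × ℤ_d^n`. -/
abbrev PhSp (d n : ℕ) := Idx d n × Idx d n

/-- von Neumann entropy `S(ρ) = -Tr (ρ log ρ)`, computed via eigenvalues
(with the convention `0 log 0 = 0`); junk value `0` on non-Hermitian matrices. -/
def entropy {I : Type} [Fintype I] [DecidableEq I] (ρ : Matrix I I ℂ) : ℝ :=
  if h : ρ.IsHermitian then -∑ i, h.eigenvalues i * Real.log (h.eigenvalues i) else 0

/-- The purity `Tr(ρ²)` (as a real number). -/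
def purity {I : Type} [Fintype I] [DecidableEq I] (ρ : Matrix I I ℂ) : ℝ :=
  ((ρ * ρ).trace).re

/-- Matrix (functional-calculus) logarithm of a Hermitian matrix. -/
def matLog {I : Type} [Fintype I] [DecidableEq I] (ρ : Matrix I I ℂ) : Matrix I I ℂ :=
  if h : ρ.IsHermitian then
    (h.eigenvectorUnitary : Matrix I I ℂ) *
      Matrix.diagonal (fun i => (Real.log (h.eigenvalues i) : ℂ)) *
      (h.eigenvectorUnitary : Matrix I I ℂ)ᴴ
  else 0

/-- Quantum relative entropy `D(ρ‖σ) = Tr(ρ (log ρ - log σ))` when the support of `ρ`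
is contained in the support of `σ` (i.e. `ker σ ⊆ ker ρ`), and `+∞` otherwise. -/
def relEnt {I : Type} [Fintype I] [DecidableEq I] (ρ σ : Matrix I I ℂ) : EReal :=
  if ∀ v, σ.mulVec v = 0 → ρ.mulVec v = 0 then
    (((ρ * (matLog ρ - matLog σ)).trace).re : EReal)
  else ⊤

/-- Quantum Rényi entropy `S_α` for `α ∈ [0,∞]`, with `S_1 = S` and
`S_∞ = -log λ_max`. -/
def renyi {I : Type} [Fintype I] [DecidableEq I] [Nonempty I] (α : ℝ≥0∞)
    (ρ : Matrix I I ℂ) : ℝ :=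
  if h : ρ.IsHermitian then
    if α = 1 then entropy ρ
    else if α = ⊤ then -Real.log (Finset.univ.sup' Finset.univ_nonempty h.eigenvalues)
    else (1 - α.toReal)⁻¹ * Real.log (∑ i, h.eigenvalues i ^ α.toReal)
  else 0

/-- Trace norm `‖A‖₁ = Tr √(AᴴA)`. -/
def traceNorm {I : Type} [Fintype I] [DecidableEq I] (A : Matrix I I ℂ) : ℝ :=
  ∑ i, Real.sqrt ((Matrix.isHermitian_conjTranspose_mul_self A).eigenvalues i)

variable (d n : ℕ)

/-- A quantum state: positive semidefinite with unit trace. -/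
def IsState [NeZero d] (ρ : Mat d n) : Prop := ρ.PosSemidef ∧ ρ.trace = 1

/-- The phase `ω^a = e^{2πia/d}` for `a : ℤ_d`. -/
def qphase (a : ZMod d) : ℂ :=
  Complex.exp (2 * (Real.pi : ℂ) * Complex.I * (a.val : ℂ) / (d : ℂ))

/-- The `n`-qudit Weyl operator `w(p,q) = w(p₁,q₁) ⊗ ⋯ ⊗ w(pₙ,qₙ)`, where
`w(p,q) = ω^{-2⁻¹pq} Z^p X^q` with `2⁻¹ = (d+1)/2` in `ℤ_d`. -/
def weyl [NeZero d] (p q : Idx d n) : Mat d n :=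
  Matrix.of fun j k =>
    ∏ i, (if j i = k i + q i then
      qphase d (p i * (k i + q i) - (((d + 1) / 2 : ℕ) : ZMod d) * (p i * q i)) else 0)

/-- Weyl operator indexed by a phase-space point. -/
def weylP [NeZero d] (x : PhSp d n) : Mat d n := weyl d n x.1 x.2

/-- The characteristic function `Ξ_ρ(x) = Tr(ρ w(-x))`. -/
def charFun [NeZero d] (ρ : Mat d n) (x : PhSp d n) : ℂ := (ρ * weylP d n (-x)).trace

/-- The mean state `M(ρ)`: the operator whose characteristic function agrees with `Ξ_ρ`
where `|Ξ_ρ| = 1` and vanishes elsewhere. -/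
def meanState [NeZero d] (ρ : Mat d n) : Mat d n :=
  ((d : ℂ) ^ n)⁻¹ •
    ∑ x : PhSp d n,
      (if ‖charFun d n ρ x‖ = 1 then charFun d n ρ x else 0) • weylP d n x

/-- The magic gap `MG(ρ) = 1 - max{|Ξ_ρ(x)| : Ξ_ρ(x) ≠ 0, |Ξ_ρ(x)| ≠ 1}`,
set to `0` if that set is empty. -/
def magicGap [NeZero d] (ρ : Mat d n) : ℝ :=
  let T := Finset.univ.filter
    (fun x : PhSp d n => charFun d n ρ x ≠ 0 ∧ ‖charFun d n ρ x‖ ≠ 1)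
  if h : T.Nonempty then 1 - T.sup' h (fun x => ‖charFun d n ρ x‖) else 0

/-- `R(ρ)`: the rank of the mean state `M(ρ)`. -/
def mrank [NeZero d] (ρ : Mat d n) : ℕ := (meanState d n ρ).rank

/-- The unitary `U_{s,t} = ∑ |si+tj⟩⟨i| ⊗ |-ti+sj⟩⟨j|` implementing the convolution. -/
def convU [NeZero d] (s t : ZMod d) :
    Matrix (Idx d n × Idx d n) (Idx d n × Idx d n) ℂ :=
  Matrix.of fun a b =>
    if a.1 = s • b.1 + t • b.2 ∧ a.2 = -(t • b.1) + s • b.2 then 1 else 0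

/-- Tensor (Kronecker) product of two `n`-qudit operators. -/
def kron (ρ σ : Mat d n) : Matrix (Idx d n × Idx d n) (Idx d n × Idx d n) ℂ :=
  Matrix.of fun x y => ρ x.1 y.1 * σ x.2 y.2

/-- The quantum convolution `ρ ⊠_{s,t} σ = Tr_B (U_{s,t} (ρ ⊗ σ) U_{s,t}ᴴ)`. -/
def qconv [NeZero d] (s t : ZMod d) (ρ σ : Mat d n) : Mat d n :=
  Matrix.of fun a a' =>
    ∑ b, (convU d n s t * kron d n ρ σ * (convU d n s t)ᴴ) (a, b) (a', b)

/-- Iterated self-convolution: `boxPow s t ρ N = ⊠^{N+1} ρ`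
(so `boxPow s t ρ 0 = ⊠^1 ρ = ρ`). -/
def boxPow [NeZero d] (s t : ZMod d) (ρ : Mat d n) : ℕ → Mat d n
  | 0 => ρ
  | N + 1 => qconv d n s t (boxPow s t ρ N) ρ

/-- `ρ` has zero mean: `Ξ_{M(ρ)}` takes only the values 0 and 1. -/
def ZeroMean [NeZero d] (ρ : Mat d n) : Prop :=
  ∀ x, charFun d n (meanState d n ρ) x = 0 ∨ charFun d n (meanState d n ρ) x = 1

/-- The quantum doubling constant `δ_q[ρ] = exp(S(ρ⊠ρ) - S(ρ))`. -/
def doubling [NeZero d] (s t : ZMod d) (ρ : Mat d n) : ℝ :=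
  Real.exp (entropy (qconv d n s t ρ ρ) - entropy ρ)

/-- The quantum Ruzsa divergence `D_{Rz}(ρ‖σ) = S(ρ⊠σ) - S(ρ)`. -/
def ruzsaDiv [NeZero d] (s t : ZMod d) (ρ σ : Mat d n) : ℝ :=
  entropy (qconv d n s t ρ σ) - entropy ρ

/-- The symmetrized quantum Ruzsa divergence
`d_{Rz}(ρ,σ) = ½(S(ρ⊠σ) + S(σ⊠ρ) - S(ρ) - S(σ))`. -/
def ruzsaSym [NeZero d] (s t : ZMod d) (ρ σ : Mat d n) : ℝ :=
  (entropy (qconv d n s t ρ σ) + entropy (qconv d n s t σ ρ)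
    - entropy ρ - entropy σ) / 2

/-- Minimal stabilizer-projection state: `ρ = d^{-(n-r)} Π_{i=1}^r (d⁻¹ ∑_k gᵢᵏ)` where the
`gᵢ = ω^{cᵢ} w(xᵢ) ∈ 𝒫_n` commute and generate an abelian subgroup of size `d^r` modulo
phases (i.e. the phase-space points `xᵢ` generate a subgroup of `V^n` of size `d^r`). -/
def IsMSPS [NeZero d] (ρ : Mat d n) : Prop :=
  ∃ r : ℕ, r ≤ n ∧
  ∃ (g : Fin r → Mat d n) (x : Fin r → PhSp d n) (c : Fin r → ZMod d),
    (∀ i, g i = qphase d (c i) • weylP d n (x i)) ∧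
    (∀ i j, Commute (g i) (g j)) ∧
    Nat.card (AddSubgroup.closure (Set.range x)) = d ^ r ∧
    ρ = ((d : ℂ) ^ (n - r))⁻¹ •
      (((List.finRange r).map
        (fun i => ((d : ℂ))⁻¹ • ∑ k : ZMod d, g i ^ (k.val))).prod)

/-- Pure stabilizer state: a rank-one projection `Π_{i=1}^n (d⁻¹ ∑_k gᵢᵏ)` where the
`gᵢ = ω^{cᵢ} w(xᵢ) ∈ 𝒫_n` commute and generate an abelian subgroup of size `d^n`
modulo phases. -/
def IsPureStab [NeZero d] (ρ : Mat d n) : Prop :=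
  ρ.rank = 1 ∧
  ∃ (g : Fin n → Mat d n) (x : Fin n → PhSp d n) (c : Fin n → ZMod d),
    (∀ i, g i = qphase d (c i) • weylP d n (x i)) ∧
    (∀ i j, Commute (g i) (g j)) ∧
    Nat.card (AddSubgroup.closure (Set.range x)) = d ^ n ∧
    ρ = (((List.finRange n).map
        (fun i => ((d : ℂ))⁻¹ • ∑ k : ZMod d, g i ^ (k.val))).prod)

/-- A (mixed) stabilizer state: a convex combination of pure stabilizer states. -/
def IsStab [NeZero d] (ρ : Mat d n) : Prop :=
  ∃ (k : ℕ) (p : Fin k → ℝ) (φ : Fin k → Mat d n),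
    (∀ i, 0 ≤ p i) ∧ (∑ i, p i = 1) ∧ (∀ i, IsPureStab d n (φ i)) ∧
    ρ = ∑ i, (p i : ℂ) • φ i

/-- Clifford unitary: a unitary mapping every Weyl operator to a Weyl operator up to phase. -/
def IsClifford [NeZero d] (U : Mat d n) : Prop :=
  U * Uᴴ = 1 ∧ Uᴴ * U = 1 ∧
  ∀ x : PhSp d n, ∃ (c : ℂ) (y : PhSp d n),
    ‖c‖ = 1 ∧ U * weylP d n x * Uᴴ = c • weylP d n y

/-- Tensor product of an `n₁`-qudit operator and an `n₂`-qudit operator. -/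
def tensorState {n₁ n₂ : ℕ} (ρ₁ : Mat d n₁) (ρ₂ : Mat d n₂) : Mat d (n₁ + n₂) :=
  Matrix.of fun x y =>
    ρ₁ (fun i => x (Fin.castAdd n₂ i)) (fun i => y (Fin.castAdd n₂ i)) *
    ρ₂ (fun i => x (Fin.natAdd n₁ i)) (fun i => y (Fin.natAdd n₁ i))

/-- Partial trace over the `i`-th qudit. -/
def ptraceAt [NeZero d] {m : ℕ} (i : Fin (m + 1)) (M : Mat d (m + 1)) : Mat d m :=
  Matrix.of fun a a' => ∑ c : ZMod d, M (i.insertNth c a) (i.insertNth c a')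

end QW

namespace QW
set_option linter.dupNamespace false

section Helpers

variable {d n : ℕ}

/-- The "half" element `(d+1)/2` of `ZMod d`. -/
def hf (d : ℕ) : ZMod d := (((d + 1) / 2 : ℕ) : ZMod d)

lemma two_hf [NeZero d] (hd : Odd d) : (2 : ZMod d) * hf d = 1 := by
  have h2 : (2 : ℕ) ∣ d + 1 := by obtain ⟨k, rfl⟩ := hd; omega
  have h1 : ((2 * ((d + 1) / 2) : ℕ) : ZMod d) = ((d + 1 : ℕ) : ZMod d) := by
    rw [Nat.mul_div_cancel' h2]
  have hd1 : ((d + 1 : ℕ) : ZMod d) = 1 := by push_cast [ZMod.natCast_self]; ring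
  calc (2 : ZMod d) * hf d = ((2 * ((d + 1) / 2) : ℕ) : ZMod d) := by push_cast [hf]; ring
    _ = 1 := by rw [h1, hd1]

lemma hf_ne_zero [NeZero d] (hd : Odd d) (hd1 : (1:ZMod d) ≠ 0) : hf d ≠ 0 := by
  intro h
  apply hd1
  rw [← two_hf (d := d) hd, h, mul_zero]

lemma dC_ne_zero [NeZero d] : (d : ℂ) ≠ 0 := Nat.cast_ne_zero.mpr (NeZero.ne d)

/-- Auxiliary exponential. -/
def expd (d : ℕ) (m : ℕ) : ℂ :=
  Complex.exp (2 * (Real.pi : ℂ) * Complex.I * (m : ℂ) / (d : ℂ))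

lemma qphase_eq_expd [NeZero d] (a : ZMod d) : qphase d a = expd d a.val := rfl

lemma expd_mod [NeZero d] (m : ℕ) : expd d (m % d) = expd d m := by
  unfold expd
  have h0 : d * (m / d) + m % d = m := Nat.div_add_mod m d
  have hm : (m : ℂ) = ((m % d : ℕ) : ℂ) + ((m / d : ℕ) : ℂ) * d := by
    conv_lhs => rw [← h0]
    push_cast
    ring
  have : (2 * (Real.pi : ℂ) * Complex.I * (m : ℂ) / (d : ℂ))
      = 2 * (Real.pi : ℂ) * Complex.I * ((m % d : ℕ) : ℂ) / (d : ℂ)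
        + ((m / d : ℕ) : ℤ) * (2 * (Real.pi : ℂ) * Complex.I) := by
    rw [Int.cast_natCast, hm]
    have hdne := dC_ne_zero (d := d)
    field_simp
  rw [this, Complex.exp_add, Complex.exp_int_mul_two_pi_mul_I, mul_one]

lemma expd_add [NeZero d] (m₁ m₂ : ℕ) : expd d (m₁ + m₂) = expd d m₁ * expd d m₂ := by
  unfold expd
  rw [← Complex.exp_add]
  congr 1
  push_cast
  ring

lemma qphase_natCast [NeZero d] (m : ℕ) : qphase d ((m : ZMod d)) = expd d m := by
  rw [qphase_eq_expd, ZMod.val_natCast, expd_mod]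

lemma qphase_zero [NeZero d] : qphase d 0 = 1 := by
  have h := qphase_natCast (d := d) 0
  simp only [Nat.cast_zero] at h
  rw [h]
  unfold expd
  simp

lemma qphase_add [NeZero d] (a b : ZMod d) :
    qphase d (a + b) = qphase d a * qphase d b := by
  have ha : ((a.val : ℕ) : ZMod d) = a := ZMod.natCast_rightInverse a
  have hb : ((b.val : ℕ) : ZMod d) = b := ZMod.natCast_rightInverse b
  have hab : a + b = ((a.val + b.val : ℕ) : ZMod d) := by push_cast [ha, hb]; ring
  rw [hab, qphase_natCast, expd_add, qphase_eq_expd, qphase_eq_expd]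

lemma qphase_mul_neg [NeZero d] (a : ZMod d) : qphase d a * qphase d (-a) = 1 := by
  rw [← qphase_add, add_neg_cancel, qphase_zero]

lemma abs_qphase [NeZero d] (a : ZMod d) : ‖qphase d a‖ = 1 := by
  unfold qphase
  rw [show 2 * (Real.pi : ℂ) * Complex.I * (a.val : ℂ) / (d : ℂ)
      = ((2 * Real.pi * a.val / d : ℝ) : ℂ) * Complex.I by push_cast; ring]
  exact Complex.norm_exp_ofReal_mul_I _

lemma qphase_ne_zero [NeZero d] (a : ZMod d) : qphase d a ≠ 0 := by
  intro h
  have h2 := abs_qphase (d := d) a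
  rw [h] at h2
  simp at h2

lemma qphase_eq_one_iff [NeZero d] (a : ZMod d) : qphase d a = 1 ↔ a = 0 := by
  constructor
  · intro h
    unfold qphase at h
    rw [Complex.exp_eq_one_iff] at h
    obtain ⟨z, hz⟩ := h
    have hdne : (d : ℂ) ≠ 0 := dC_ne_zero
    have h2 : (2 : ℂ) * Real.pi * Complex.I ≠ 0 := by
      simp [Real.pi_ne_zero, Complex.I_ne_zero, Complex.ofReal_ne_zero]
    have h4 := congrArg (fun w => w * (d:ℂ)) hz
    rw [div_mul_cancel₀ _ hdne] at h4
    have hval : (a.val : ℂ) = (z : ℂ) * d := by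
      apply mul_left_cancel₀ h2
      linear_combination h4
    have hint : (a.val : ℤ) = z * d := by exact_mod_cast hval
    have hlt : (a.val : ℤ) < d := by exact_mod_cast a.val_lt
    have hge : (0 : ℤ) ≤ (a.val : ℤ) := by positivity
    have hdpos : (0 : ℤ) < d := by exact_mod_cast Nat.pos_of_ne_zero (NeZero.ne d)
    have hz0 : z = 0 := by
      rcases lt_trichotomy z 0 with h | h | h
      · nlinarith
      · exact h
      · nlinarith
    have hval0 : a.val = 0 := by
      have : (a.val : ℤ) = 0 := by rw [hint, hz0]; ring
      exact_mod_cast this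
    have hrec := ZMod.natCast_rightInverse (n := d) a
    rw [← hrec, hval0]
    simp
  · intro h; rw [h, qphase_zero]

lemma sum_qphase [NeZero d] (a : ZMod d) :
    ∑ k : ZMod d, qphase d (a * k) = if a = 0 then (d : ℂ) else 0 := by
  by_cases ha : a = 0
  · simp [ha, qphase_zero, ZMod.card]
  · rw [if_neg ha]
    have key : (∑ k : ZMod d, qphase d (a * k)) * qphase d a
        = ∑ k : ZMod d, qphase d (a * k) := by
      rw [Finset.sum_mul]
      rw [← Equiv.sum_comp (Equiv.addRight (1 : ZMod d)) (fun k => qphase d (a * k))]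
      apply Finset.sum_congr rfl
      intro k _
      rw [← qphase_add]
      congr 1
      simp [Equiv.coe_addRight]
      ring
    have hq : qphase d a ≠ 1 := fun h => ha ((qphase_eq_one_iff a).mp h)
    by_contra hne
    exact hq (mul_left_cancel₀ hne (by rw [key, mul_one]))

lemma qphase_sum [NeZero d] {ι : Type*} (s : Finset ι) (f : ι → ZMod d) :
    qphase d (∑ i ∈ s, f i) = ∏ i ∈ s, qphase d (f i) := by
  induction s using Finset.cons_induction with
  | empty => simp [qphase_zero]
  | cons i s hi ih => rw [Finset.sum_cons, Finset.prod_cons, qphase_add, ih]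

end Helpers

section Weyl

variable {d n : ℕ}

/-- Symplectic form on phase space. -/
def symp (x y : PhSp d n) : ZMod d := ∑ i, (x.1 i * y.2 i - y.1 i * x.2 i)

/-- Scalar action on phase space. -/
def sdot (a : ZMod d) (x : PhSp d n) : PhSp d n :=
  (fun i => a * x.1 i, fun i => a * x.2 i)

lemma weyl_apply [NeZero d] (p q : Idx d n) (j k : Idx d n) :
    weyl d n p q j k = if j = k + q then
      qphase d (∑ i, (p i * (k i + q i) - hf d * (p i * q i))) else 0 := by
  simp only [weyl, Matrix.of_apply]
  by_cases h : j = k + q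
  · rw [if_pos h, qphase_sum]
    apply Finset.prod_congr rfl
    intro i _
    rw [if_pos (by rw [h]; rfl)]
    rfl
  · rw [if_neg h]
    obtain ⟨i, hi⟩ : ∃ i, j i ≠ k i + q i := by
      by_contra hc
      push_neg at hc
      exact h (funext fun i => hc i)
    exact Finset.prod_eq_zero (Finset.mem_univ i) (by rw [if_neg hi])

lemma weylP_apply [NeZero d] (x : PhSp d n) (j k : Idx d n) :
    weylP d n x j k = if j = k + x.2 then
      qphase d (∑ i, (x.1 i * (k i + x.2 i) - hf d * (x.1 i * x.2 i))) else 0 :=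
  weyl_apply x.1 x.2 j k

lemma weylP_zero [NeZero d] : weylP d n (0 : PhSp d n) = 1 := by
  ext j k
  rw [weylP_apply, Matrix.one_apply]
  simp [qphase_zero]

lemma weylP_mul [NeZero d] (hd : Odd d) (x y : PhSp d n) :
    weylP d n x * weylP d n y
      = qphase d (hf d * symp x y) • weylP d n (x + y) := by
  ext j k
  rw [Matrix.mul_apply, Matrix.smul_apply, smul_eq_mul]
  rw [Finset.sum_eq_single (k + y.2)
    (fun b _ hb => by rw [weylP_apply x j b, weylP_apply y b k, if_neg (fun hc => hb hc), mul_zero])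
    (fun hmem => absurd (Finset.mem_univ _) hmem)]
  rw [weylP_apply x j (k + y.2), weylP_apply y (k + y.2) k, if_pos rfl,
    weylP_apply (x + y) j k]
  have hcond : (j = k + y.2 + x.2) ↔ (j = k + (x + y).2) := by
    constructor <;> intro h <;> rw [h] <;>
      · show _ = _
        rw [add_assoc, add_comm y.2 x.2] <;> rfl
  by_cases hc : j = k + y.2 + x.2
  · rw [if_pos hc, if_pos (hcond.mp hc), ← qphase_add, ← qphase_add]
    congr 1
    show _ = hf d * symp x y + _
    rw [symp, Finset.mul_sum, ← Finset.sum_add_distrib, ← Finset.sum_add_distrib]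
    apply Finset.sum_congr rfl
    intro i _
    show x.1 i * ((k + y.2) i + x.2 i) - hf d * (x.1 i * x.2 i)
        + (y.1 i * (k i + y.2 i) - hf d * (y.1 i * y.2 i))
      = hf d * (x.1 i * y.2 i - y.1 i * x.2 i)
        + ((x + y).1 i * (k i + (x + y).2 i) - hf d * ((x + y).1 i * (x + y).2 i))
    have h1 : (k + y.2) i = k i + y.2 i := rfl
    have h2 : (x + y).1 i = x.1 i + y.1 i := rfl
    have h3 : (x + y).2 i = x.2 i + y.2 i := rfl
    rw [h1, h2, h3]
    linear_combination (y.1 i * x.2 i) * (two_hf (d := d) hd)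
  · rw [if_neg hc, if_neg (fun h => hc (hcond.mpr h)), zero_mul, mul_zero]

lemma symp_self_neg (x : PhSp d n) : symp x (-x) = (0 : ZMod d) := by
  rw [symp]
  apply Finset.sum_eq_zero
  intro i _
  have h1 : (-x).2 i = -(x.2 i) := rfl
  have h2 : (-x).1 i = -(x.1 i) := rfl
  rw [h1, h2]
  ring

lemma weylP_mul_neg [NeZero d] (hd : Odd d) (x : PhSp d n) :
    weylP d n x * weylP d n (-x) = 1 := by
  rw [weylP_mul hd, symp_self_neg, mul_zero, qphase_zero, one_smul, add_neg_cancel, weylP_zero]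

lemma weylP_neg_mul [NeZero d] (hd : Odd d) (x : PhSp d n) :
    weylP d n (-x) * weylP d n x = 1 := by
  have := weylP_mul_neg hd (-x)
  rwa [neg_neg] at this

lemma qphase_conj [NeZero d] (a : ZMod d) :
    (starRingEnd ℂ) (qphase d a) = qphase d (-a) := by
  apply mul_left_cancel₀ (qphase_ne_zero (d := d) a)
  rw [qphase_mul_neg, Complex.mul_conj]
  norm_cast
  rw [← Complex.sq_norm, abs_qphase]
  norm_num

lemma weylP_conjTranspose [NeZero d] (hd : Odd d) (x : PhSp d n) :
    (weylP d n x)ᴴ = weylP d n (-x) := by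
  ext j k
  rw [Matrix.conjTranspose_apply, weylP_apply, weylP_apply]
  have hcond : (k = j + x.2) ↔ (j = k + (-x).2) := by
    have : (-x).2 = -x.2 := rfl
    rw [this]
    constructor <;> intro h <;> rw [h] <;> abel
  by_cases hc : k = j + x.2
  · rw [if_pos hc, if_pos (hcond.mp hc),
      show star (qphase d (∑ i, (x.1 i * (j i + x.2 i) - hf d * (x.1 i * x.2 i))))
        = (starRingEnd ℂ) (qphase d (∑ i, (x.1 i * (j i + x.2 i) - hf d * (x.1 i * x.2 i)))) from rfl,
      qphase_conj]
    have : -(∑ i, (x.1 i * (j i + x.2 i) - hf d * (x.1 i * x.2 i)))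
        = ∑ i, -((x.1 i * (j i + x.2 i) - hf d * (x.1 i * x.2 i))) := by
      rw [← Finset.sum_neg_distrib]
    rw [this]
    congr 1
    apply Finset.sum_congr rfl
    intro i _
    have h1 : (-x).1 i = -(x.1 i) := rfl
    have h2 : (-x).2 i = -(x.2 i) := rfl
    have h3 : k i = j i + x.2 i := by rw [hc]; rfl
    rw [h1, h2, h3]
    linear_combination (x.1 i * x.2 i) * (two_hf (d := d) hd)
  · rw [if_neg hc, if_neg (fun h => hc (hcond.mpr h)), star_zero]

lemma trace_weylP [NeZero d] (x : PhSp d n) :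
    (weylP d n x).trace = if x = 0 then ((d : ℂ)) ^ n else 0 := by
  rw [Matrix.trace]
  by_cases hq : x.2 = 0
  · have hdiag : ∀ k : Idx d n, (weylP d n x).diag k = ∏ i, qphase d (x.1 i * k i) := by
      intro k
      rw [Matrix.diag_apply, weylP_apply, if_pos (by rw [hq, add_zero]), qphase_sum]
      apply Finset.prod_congr rfl
      intro i _
      congr 1
      have h2 : x.2 i = 0 := by rw [hq]; rfl
      rw [h2]
      ring
    have step1 : ∑ k, (weylP d n x).diag k = ∑ k : Idx d n, ∏ i, qphase d (x.1 i * k i) :=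
      Finset.sum_congr rfl (fun k _ => hdiag k)
    have step2 : (∑ k : Idx d n, ∏ i, qphase d (x.1 i * k i))
        = ∏ i : Fin n, ∑ v : ZMod d, qphase d (x.1 i * v) :=
      (Fintype.prod_sum (fun (i : Fin n) (v : ZMod d) => qphase d (x.1 i * v))).symm
    have step3 : (∏ i : Fin n, ∑ v : ZMod d, qphase d (x.1 i * v))
        = ∏ i : Fin n, (if x.1 i = 0 then (d : ℂ) else 0) :=
      Finset.prod_congr rfl (fun i _ => sum_qphase (x.1 i))
    rw [step1, step2, step3]
    by_cases hp : x.1 = 0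
    · have hx0 : x = 0 := Prod.ext hp hq
      rw [if_pos hx0]
      rw [Finset.prod_congr rfl (fun i _ => by rw [if_pos (by rw [hp]; rfl)])]
      simp
    · have hx0 : x ≠ 0 := fun h => hp (by rw [h]; rfl)
      rw [if_neg hx0]
      obtain ⟨i, hi⟩ : ∃ i, x.1 i ≠ 0 := by
        by_contra hc
        push_neg at hc
        exact hp (funext hc)
      exact Finset.prod_eq_zero (Finset.mem_univ i) (by rw [if_neg hi])
  · have hx0 : x ≠ 0 := fun h => hq (by rw [h]; rfl)
    rw [if_neg hx0]
    apply Finset.sum_eq_zero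
    intro k _
    rw [Matrix.diag_apply, weylP_apply, if_neg]
    intro hc
    obtain ⟨i, hi⟩ : ∃ i, x.2 i ≠ 0 := by
      by_contra hcc
      push_neg at hcc
      exact hq (funext hcc)
    have h5 := congrFun hc i
    simp only [Pi.add_apply] at h5
    exact hi (left_eq_add.mp h5)

lemma trace_weylP_mul_weylP [NeZero d] (hd : Odd d) (x y : PhSp d n) :
    (weylP d n x * weylP d n y).trace = if x + y = 0 then ((d : ℂ)) ^ n else 0 := by
  rw [weylP_mul hd, Matrix.trace_smul, trace_weylP, smul_eq_mul]
  by_cases h : x + y = 0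
  · simp only [if_pos h]
    have hy : y = -x := by rw [← neg_eq_of_add_eq_zero_right h]
    rw [hy, symp_self_neg, mul_zero, qphase_zero, one_mul]
  · simp only [if_neg h, mul_zero]

end Weyl

section Fourier

variable {d n : ℕ}

lemma trace_mul_entries [NeZero d] (A B : Mat d n) :
    (A * B).trace = ∑ p : PhSp d n, A p.1 p.2 * B p.2 p.1 := by
  rw [Fintype.sum_prod_type, Matrix.trace]
  exact Finset.sum_congr rfl (fun u _ => by rw [Matrix.diag_apply, Matrix.mul_apply])

lemma sum_qphase_pi [NeZero d] (w : Idx d n) :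
    ∑ p : Idx d n, qphase d (∑ i, p i * w i) = if w = 0 then ((d : ℂ)) ^ n else 0 := by
  have step1 : ∀ p : Idx d n, qphase d (∑ i, p i * w i) = ∏ i, qphase d (p i * w i) :=
    fun p => qphase_sum _ _
  rw [Finset.sum_congr rfl (fun p _ => step1 p)]
  have step2 : (∑ p : Idx d n, ∏ i, qphase d (p i * w i))
      = ∏ i : Fin n, ∑ v : ZMod d, qphase d (v * w i) :=
    (Fintype.prod_sum (fun (i : Fin n) (v : ZMod d) => qphase d (v * w i))).symm
  rw [step2]
  have step3 : ∀ i : Fin n, (∑ v : ZMod d, qphase d (v * w i))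
      = if w i = 0 then (d : ℂ) else 0 := by
    intro i
    rw [Finset.sum_congr rfl (fun v _ => by rw [mul_comm (v) (w i)])]
    exact sum_qphase (w i)
  rw [Finset.prod_congr rfl (fun i _ => step3 i)]
  by_cases hw : w = 0
  · rw [if_pos hw]
    rw [Finset.prod_congr rfl (fun i _ => by rw [if_pos (by rw [hw]; rfl)])]
    simp
  · rw [if_neg hw]
    obtain ⟨i, hi⟩ : ∃ i, w i ≠ 0 := by
      by_contra hc; push_neg at hc; exact hw (funext hc)
    exact Finset.prod_eq_zero (Finset.mem_univ i) (by rw [if_neg hi])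

lemma sum_weylP_mul [NeZero d] (hd : Odd d) (u v y z : Idx d n) :
    ∑ x : PhSp d n, weylP d n x u v * weylP d n (-x) y z
      = if u = z ∧ v = y then ((d : ℂ)) ^ n else 0 := by
  rw [Fintype.sum_prod_type_right]
  have inner : ∀ q : Idx d n, (∑ p : Idx d n, weylP d n (p, q) u v * weylP d n (-(p, q)) y z)
      = if (u = v + q ∧ y = z + (-q)) then
          (if (fun i => v i - z i + q i) = (0 : Idx d n) then ((d : ℂ)) ^ n else 0) else 0 := by
    intro q
    have hterm : ∀ p : Idx d n, weylP d n (p, q) u v * weylP d n (-(p, q)) y z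
        = if (u = v + q ∧ y = z + (-q)) then qphase d (∑ i, p i * (v i - z i + q i)) else 0 := by
      intro p
      rw [weylP_apply, weylP_apply]
      by_cases h1 : u = v + q
      · by_cases h2 : y = z + (-(p, q)).2
        · rw [if_pos h1, if_pos h2, if_pos ⟨h1, h2⟩, ← qphase_add]
          congr 1
          rw [← Finset.sum_add_distrib]
          apply Finset.sum_congr rfl
          intro i _
          show (p, q).1 i * (v i + (p, q).2 i) - hf d * ((p, q).1 i * (p, q).2 i)
              + ((-(p, q)).1 i * (z i + (-(p, q)).2 i) - hf d * ((-(p, q)).1 i * (-(p, q)).2 i))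
            = p i * (v i - z i + q i)
          show p i * (v i + q i) - hf d * (p i * q i)
              + (-(p i) * (z i + -(q i)) - hf d * (-(p i) * -(q i))) = p i * (v i - z i + q i)
          linear_combination (-(p i * q i)) * (two_hf (d := d) hd)
        · rw [if_neg h2, mul_zero, if_neg (fun hc => h2 hc.2)]
      · rw [if_neg h1, zero_mul, if_neg (fun hc => h1 hc.1)]
    rw [Finset.sum_congr rfl (fun p _ => hterm p)]
    by_cases hc : u = v + q ∧ y = z + (-q)
    · rw [if_pos hc]
      rw [Finset.sum_congr rfl (fun p _ => if_pos hc)]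
      exact sum_qphase_pi _
    · rw [if_neg hc]
      rw [Finset.sum_congr rfl (fun p _ => if_neg hc)]
      simp
  rw [Finset.sum_congr rfl (fun q _ => inner q)]
  rw [Finset.sum_eq_single (z - v)]
  · have hw : (fun i => v i - z i + (z - v) i) = (0 : Idx d n) := by
      funext i
      show v i - z i + (z i - v i) = 0
      ring
    have hc1 : v + (z - v) = z := by funext i; show v i + (z i - v i) = z i; ring
    have hc2 : z + (-(z - v)) = v := by funext i; show z i + -(z i - v i) = v i; ring
    rw [hc1, hc2, if_pos hw]
    by_cases h : u = z ∧ v = y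
    · rw [if_pos ⟨h.1, h.2.symm⟩, if_pos h]
    · rw [if_neg (fun hc => h ⟨hc.1, hc.2.symm⟩), if_neg h]
  · intro q _ hq
    have hw : (fun i => v i - z i + q i) ≠ (0 : Idx d n) := by
      intro hc
      apply hq
      funext i
      have := congrFun hc i
      show q i = z i - v i
      simp only [Pi.zero_apply] at this
      linear_combination this
    by_cases hc : u = v + q ∧ y = z + (-q)
    · rw [if_pos hc, if_neg hw]
    · rw [if_neg hc]
  · intro h
    exact absurd (Finset.mem_univ _) h

lemma trace_mul_eq_sum_charFun [NeZero d] (hd : Odd d) (A B : Mat d n) :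
    (A * B).trace
      = ((d : ℂ) ^ n)⁻¹ * ∑ x : PhSp d n, charFun d n A x * charFun d n B (-x) := by
  have hch : ∀ x : PhSp d n, charFun d n A x * charFun d n B (-x)
      = ∑ p : PhSp d n, ∑ r : PhSp d n,
          A p.1 p.2 * weylP d n (-x) p.2 p.1 * (B r.1 r.2 * weylP d n x r.2 r.1) := by
    intro x
    rw [charFun, charFun, neg_neg, trace_mul_entries, trace_mul_entries, Finset.sum_mul_sum]
  rw [Finset.sum_congr rfl (fun x _ => hch x), Finset.sum_comm]
  have hswap : ∀ p : PhSp d n,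
      (∑ x : PhSp d n, ∑ r : PhSp d n,
        A p.1 p.2 * weylP d n (-x) p.2 p.1 * (B r.1 r.2 * weylP d n x r.2 r.1))
      = ∑ r : PhSp d n, A p.1 p.2 * B r.1 r.2
          * ∑ x : PhSp d n, weylP d n x r.2 r.1 * weylP d n (-x) p.2 p.1 := by
    intro p
    rw [Finset.sum_comm]
    apply Finset.sum_congr rfl
    intro r _
    rw [Finset.mul_sum]
    apply Finset.sum_congr rfl
    intro x _
    ring
  rw [Finset.sum_congr rfl (fun p _ => hswap p)]
  have hcol : ∀ p : PhSp d n,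
      (∑ r : PhSp d n, A p.1 p.2 * B r.1 r.2
          * ∑ x : PhSp d n, weylP d n x r.2 r.1 * weylP d n (-x) p.2 p.1)
      = A p.1 p.2 * B p.2 p.1 * (d : ℂ) ^ n := by
    intro p
    have hterm : ∀ r : PhSp d n, A p.1 p.2 * B r.1 r.2
          * (∑ x : PhSp d n, weylP d n x r.2 r.1 * weylP d n (-x) p.2 p.1)
        = A p.1 p.2 * B r.1 r.2 * (if r.2 = p.1 ∧ r.1 = p.2 then ((d : ℂ)) ^ n else 0) := by
      intro r
      rw [sum_weylP_mul hd]
    rw [Finset.sum_congr rfl (fun r _ => hterm r)]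
    rw [Finset.sum_eq_single ((p.2, p.1) : PhSp d n)]
    · rw [if_pos ⟨rfl, rfl⟩]
    · intro r _ hr
      rw [if_neg, mul_zero]
      intro hc
      exact hr (Prod.ext hc.2 hc.1)
    · intro h; exact absurd (Finset.mem_univ _) h
  rw [Finset.sum_congr rfl (fun p _ => hcol p)]
  rw [trace_mul_entries, ← Finset.sum_mul,
    mul_comm (∑ i : PhSp d n, A i.1 i.2 * B i.2 i.1) ((d : ℂ) ^ n), ← mul_assoc,
    inv_mul_cancel₀ (pow_ne_zero _ dC_ne_zero), one_mul]

lemma charFun_sub [NeZero d] (A B : Mat d n) (x : PhSp d n) :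
    charFun d n (A - B) x = charFun d n A x - charFun d n B x := by
  rw [charFun, charFun, charFun, Matrix.sub_mul, Matrix.trace_sub]

lemma charFun_zero_eq_trace [NeZero d] (A : Mat d n) :
    charFun d n A 0 = A.trace := by
  rw [charFun, neg_zero, weylP_zero, mul_one]

lemma charFun_neg_of_hermitian [NeZero d] (hd : Odd d) {A : Mat d n} (hA : A.IsHermitian)
    (x : PhSp d n) : charFun d n A (-x) = star (charFun d n A x) := by
  rw [charFun, charFun, neg_neg, ← Matrix.trace_conjTranspose, Matrix.conjTranspose_mul,
    weylP_conjTranspose hd, neg_neg, hA.eq, Matrix.trace_mul_comm]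

lemma charFun_meanState_eq [NeZero d] (hd : Odd d) (ρ : Mat d n) (y : PhSp d n) :
    charFun d n (meanState d n ρ) y
      = if ‖charFun d n ρ y‖ = 1 then charFun d n ρ y else 0 := by
  rw [charFun, meanState, Matrix.smul_mul, Matrix.trace_smul, Matrix.sum_mul,
    Matrix.trace_sum]
  have hterm : ∀ x : PhSp d n,
      (((if ‖charFun d n ρ x‖ = 1 then charFun d n ρ x else 0) • weylP d n x)
        * weylP d n (-y)).trace
      = (if ‖charFun d n ρ x‖ = 1 then charFun d n ρ x else 0)
          * (if x = y then ((d : ℂ)) ^ n else 0) := by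
    intro x
    rw [Matrix.smul_mul, Matrix.trace_smul, smul_eq_mul, trace_weylP_mul_weylP hd]
    congr 1
    by_cases h : x = y
    · rw [if_pos h, if_pos (by rw [h, add_neg_cancel])]
    · rw [if_neg h, if_neg (fun hc => h (by rwa [add_neg_eq_zero] at hc))]
  rw [Finset.sum_congr rfl (fun x _ => hterm x)]
  rw [Finset.sum_eq_single y]
  · rw [if_pos rfl, smul_eq_mul]
    by_cases h : ‖charFun d n ρ y‖ = 1
    · rw [if_pos h]
      rw [mul_comm (charFun d n ρ y) ((d : ℂ) ^ n), ← mul_assoc,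
        inv_mul_cancel₀ (pow_ne_zero _ dC_ne_zero), one_mul]
    · rw [if_neg h]
      rw [zero_mul, mul_zero]
  · intro x _ hx
    rw [if_neg hx, mul_zero]
  · intro h; exact absurd (Finset.mem_univ _) h

end Fourier

section Conv

variable {d n : ℕ}

lemma trace_mul_entries' {I : Type} [Fintype I] [DecidableEq I] (A B : Matrix I I ℂ) :
    (A * B).trace = ∑ i, ∑ j, A i j * B j i := by
  simp [Matrix.trace, Matrix.mul_apply, Matrix.diag]

lemma ite_mul_ite_zero (P Q : Prop) [Decidable P] [Decidable Q] (a b : ℂ) :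
    (if P then a else 0) * (if Q then b else 0) = if P ∧ Q then a * b else 0 := by
  by_cases hP : P <;> by_cases hQ : Q <;> simp [hP, hQ]

/-- The permutation of phase space implemented by `U_{s,t}`. -/
def Lmap (s t : ZMod d) (b : PhSp d n) : PhSp d n :=
  (s • b.1 + t • b.2, -(t • b.1) + s • b.2)

/-- Inverse of `Lmap`. -/
def Lmapinv (s t : ZMod d) (a : PhSp d n) : PhSp d n :=
  (s • a.1 - t • a.2, t • a.1 + s • a.2)

lemma Lmap_left_inv {s t : ZMod d} (hst : s ^ 2 + t ^ 2 = 1) (b : PhSp d n) :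
    Lmapinv s t (Lmap s t b) = b := by
  apply Prod.ext
  · funext i
    show s * (s * b.1 i + t * b.2 i) - t * (-(t * b.1 i) + s * b.2 i) = b.1 i
    linear_combination (b.1 i) * hst
  · funext i
    show t * (s * b.1 i + t * b.2 i) + s * (-(t * b.1 i) + s * b.2 i) = b.2 i
    linear_combination (b.2 i) * hst

lemma Lmap_right_inv {s t : ZMod d} (hst : s ^ 2 + t ^ 2 = 1) (a : PhSp d n) :
    Lmap s t (Lmapinv s t a) = a := by
  apply Prod.ext
  · funext i
    show s * (s * a.1 i - t * a.2 i) + t * (t * a.1 i + s * a.2 i) = a.1 i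
    linear_combination (a.1 i) * hst
  · funext i
    show -(t * (s * a.1 i - t * a.2 i)) + s * (t * a.1 i + s * a.2 i) = a.2 i
    linear_combination (a.2 i) * hst

lemma Lmap_eq_iff {s t : ZMod d} (hst : s ^ 2 + t ^ 2 = 1) (a b : PhSp d n) :
    a = Lmap s t b ↔ b = Lmapinv s t a := by
  constructor
  · intro h; rw [h, Lmap_left_inv hst]
  · intro h; rw [h, Lmap_right_inv hst]

lemma convU_apply [NeZero d] (s t : ZMod d) (a b : PhSp d n) :
    convU d n s t a b = if a = Lmap s t b then 1 else 0 := by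
  by_cases h : a = Lmap s t b
  · rw [if_pos h]
    show (if a.1 = s • b.1 + t • b.2 ∧ a.2 = -(t • b.1) + s • b.2 then (1:ℂ) else 0) = 1
    rw [if_pos ⟨congrArg Prod.fst h, congrArg Prod.snd h⟩]
  · rw [if_neg h]
    show (if a.1 = s • b.1 + t • b.2 ∧ a.2 = -(t • b.1) + s • b.2 then (1:ℂ) else 0) = 0
    rw [if_neg (fun hc => h (Prod.ext hc.1 hc.2))]

lemma convUH_mul_mul_convU_apply [NeZero d] (s t : ZMod d) (hst : s ^ 2 + t ^ 2 = 1)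
    (X : Matrix (PhSp d n) (PhSp d n) ℂ) (b b' : PhSp d n) :
    ((convU d n s t)ᴴ * X * convU d n s t) b b' = X (Lmap s t b) (Lmap s t b') := by
  rw [Matrix.mul_apply]
  rw [Finset.sum_eq_single (Lmap s t b')]
  · rw [convU_apply, if_pos rfl, mul_one, Matrix.mul_apply]
    rw [Finset.sum_eq_single (Lmap s t b)]
    · rw [Matrix.conjTranspose_apply, convU_apply, if_pos rfl, star_one, one_mul]
    · intro a _ ha
      rw [Matrix.conjTranspose_apply, convU_apply, if_neg (fun hc => ha (by rw [hc])),
        star_zero, zero_mul]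
    · intro h; exact absurd (Finset.mem_univ _) h
  · intro a' _ ha'
    rw [convU_apply, if_neg (fun hc => ha' (by rw [hc])), mul_zero]
  · intro h; exact absurd (Finset.mem_univ _) h

lemma convU_mul_mul_convUH_apply [NeZero d] (s t : ZMod d) (hst : s ^ 2 + t ^ 2 = 1)
    (X : Matrix (PhSp d n) (PhSp d n) ℂ) (a a' : PhSp d n) :
    (convU d n s t * X * (convU d n s t)ᴴ) a a' = X (Lmapinv s t a) (Lmapinv s t a') := by
  rw [Matrix.mul_apply]
  rw [Finset.sum_eq_single (Lmapinv s t a')]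
  · rw [Matrix.conjTranspose_apply, convU_apply,
      if_pos ((Lmap_eq_iff hst a' (Lmapinv s t a')).mpr rfl), star_one, mul_one,
      Matrix.mul_apply]
    rw [Finset.sum_eq_single (Lmapinv s t a)]
    · rw [convU_apply, if_pos ((Lmap_eq_iff hst a (Lmapinv s t a)).mpr rfl), one_mul]
    · intro b _ hb
      rw [convU_apply, if_neg (fun hc => hb (((Lmap_eq_iff hst a b).mp hc).symm ▸ rfl)),
        zero_mul]
    · intro h; exact absurd (Finset.mem_univ _) h
  · intro b' _ hb'
    rw [Matrix.conjTranspose_apply, convU_apply,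
      if_neg (fun hc => hb' (((Lmap_eq_iff hst a' b').mp hc).symm ▸ rfl)), star_zero, mul_zero]
  · intro h; exact absurd (Finset.mem_univ _) h

lemma convUH_mul_convU [NeZero d] (s t : ZMod d) (hst : s ^ 2 + t ^ 2 = 1) :
    (convU d n s t)ᴴ * convU d n s t = 1 := by
  have h := fun b b' => convUH_mul_mul_convU_apply s t hst (1 : Matrix (PhSp d n) (PhSp d n) ℂ) b b'
  ext b b'
  have h2 : ((convU d n s t)ᴴ * (1 : Matrix (PhSp d n) (PhSp d n) ℂ) * convU d n s t) b b'
      = ((convU d n s t)ᴴ * convU d n s t) b b' := by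
    rw [Matrix.mul_one]
  rw [← h2, h b b', Matrix.one_apply, Matrix.one_apply]
  by_cases hc : b = b'
  · rw [if_pos hc, if_pos (by rw [hc])]
  · rw [if_neg hc, if_neg]
    intro hL
    apply hc
    have := congrArg (Lmapinv s t) hL
    rwa [Lmap_left_inv hst, Lmap_left_inv hst] at this

lemma convU_mul_convUH [NeZero d] (s t : ZMod d) (hst : s ^ 2 + t ^ 2 = 1) :
    convU d n s t * (convU d n s t)ᴴ = 1 :=
  mul_eq_one_comm.mp (convUH_mul_convU s t hst)

lemma kron_conjTranspose [NeZero d] (A B : Mat d n) :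
    (kron d n A B)ᴴ = kron d n Aᴴ Bᴴ := by
  ext x y
  show star (A y.1 x.1 * B y.2 x.2) = star (A y.1 x.1) * star (B y.2 x.2)
  rw [star_mul']

lemma kron_mul_kron [NeZero d] (A B C D : Mat d n) :
    kron d n A B * kron d n C D = kron d n (A * C) (B * D) := by
  ext x y
  rw [Matrix.mul_apply]
  show ∑ z : Idx d n × Idx d n, kron d n A B x z * kron d n C D z y
      = (∑ z1, A x.1 z1 * C z1 y.1) * (∑ z2, B x.2 z2 * D z2 y.2)
  rw [Finset.sum_mul_sum, Fintype.sum_prod_type]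
  apply Finset.sum_congr rfl
  intro z1 _
  apply Finset.sum_congr rfl
  intro z2 _
  show A x.1 z1 * B x.2 z2 * (C z1 y.1 * D z2 y.2) = _
  ring

lemma trace_kron [NeZero d] (A B : Mat d n) :
    (kron d n A B).trace = A.trace * B.trace := by
  show (∑ x : Idx d n × Idx d n, (kron d n A B).diag x) = (∑ a, A.diag a) * (∑ b, B.diag b)
  rw [Finset.sum_mul_sum, Fintype.sum_prod_type]
  rfl

lemma sdot_neg (a : ZMod d) (x : PhSp d n) : sdot a (-x) = -(sdot a x) := by
  apply Prod.ext
  · funext i; show a * (-(x.1 i)) = -(a * x.1 i); ring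
  · funext i; show a * (-(x.2 i)) = -(a * x.2 i); ring

lemma sdot_zero (a : ZMod d) : sdot a (0 : PhSp d n) = 0 := by
  apply Prod.ext
  · funext i; show a * 0 = 0; ring
  · funext i; show a * 0 = 0; ring

lemma convU_conj_kron_weylP [NeZero d] (hd : Odd d) {s t : ZMod d} (hst : s ^ 2 + t ^ 2 = 1)
    (z : PhSp d n) :
    (convU d n s t)ᴴ * kron d n (weylP d n z) 1 * convU d n s t
      = kron d n (weylP d n (sdot s z)) (weylP d n (sdot t z)) := by
  ext b b'
  rw [convUH_mul_mul_convU_apply s t hst]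
  show weylP d n z (Lmap s t b).1 (Lmap s t b').1 * (1 : Mat d n) (Lmap s t b).2 (Lmap s t b').2
     = weylP d n (sdot s z) b.1 b'.1 * weylP d n (sdot t z) b.2 b'.2
  rw [weylP_apply, weylP_apply, weylP_apply, Matrix.one_apply, ite_mul_ite_zero,
    ite_mul_ite_zero, mul_one]
  have hiff : ((Lmap s t b).1 = (Lmap s t b').1 + z.2 ∧ (Lmap s t b).2 = (Lmap s t b').2)
      ↔ (b.1 = b'.1 + (sdot s z).2 ∧ b.2 = b'.2 + (sdot t z).2) := by
    constructor
    · rintro ⟨h1, h2⟩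
      constructor
      · funext i
        have e1 := congrFun h1 i
        have e2 := congrFun h2 i
        show b.1 i = b'.1 i + s * z.2 i
        have e1' : s * b.1 i + t * b.2 i = (s * b'.1 i + t * b'.2 i) + z.2 i := e1
        have e2' : -(t * b.1 i) + s * b.2 i = -(t * b'.1 i) + s * b'.2 i := e2
        linear_combination s * e1' - t * e2' + (b'.1 i - b.1 i) * hst
      · funext i
        have e1 := congrFun h1 i
        have e2 := congrFun h2 i
        show b.2 i = b'.2 i + t * z.2 i
        have e1' : s * b.1 i + t * b.2 i = (s * b'.1 i + t * b'.2 i) + z.2 i := e1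
        have e2' : -(t * b.1 i) + s * b.2 i = -(t * b'.1 i) + s * b'.2 i := e2
        linear_combination t * e1' + s * e2' + (b'.2 i - b.2 i) * hst
    · rintro ⟨h1, h2⟩
      constructor
      · funext i
        have e1 : b.1 i = b'.1 i + s * z.2 i := congrFun h1 i
        have e2 : b.2 i = b'.2 i + t * z.2 i := congrFun h2 i
        show s * b.1 i + t * b.2 i = (s * b'.1 i + t * b'.2 i) + z.2 i
        rw [e1, e2]
        linear_combination (z.2 i) * hst
      · funext i
        have e1 : b.1 i = b'.1 i + s * z.2 i := congrFun h1 i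
        have e2 : b.2 i = b'.2 i + t * z.2 i := congrFun h2 i
        show -(t * b.1 i) + s * b.2 i = -(t * b'.1 i) + s * b'.2 i
        rw [e1, e2]
        ring
  have hphase : qphase d (∑ i, (z.1 i * ((Lmap s t b').1 i + z.2 i) - hf d * (z.1 i * z.2 i)))
      = qphase d (∑ i, ((sdot s z).1 i * (b'.1 i + (sdot s z).2 i)
            - hf d * ((sdot s z).1 i * (sdot s z).2 i)))
        * qphase d (∑ i, ((sdot t z).1 i * (b'.2 i + (sdot t z).2 i)
            - hf d * ((sdot t z).1 i * (sdot t z).2 i))) := by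
    rw [← qphase_add]
    congr 1
    rw [← Finset.sum_add_distrib]
    apply Finset.sum_congr rfl
    intro i _
    show z.1 i * ((s * b'.1 i + t * b'.2 i) + z.2 i) - hf d * (z.1 i * z.2 i)
        = (s * z.1 i) * (b'.1 i + s * z.2 i) - hf d * ((s * z.1 i) * (s * z.2 i))
          + ((t * z.1 i) * (b'.2 i + t * z.2 i) - hf d * ((t * z.1 i) * (t * z.2 i)))
    linear_combination (hf d * (z.1 i * z.2 i) - z.1 i * z.2 i) * hst
  rw [if_congr hiff hphase rfl]

lemma charFun_qconv [NeZero d] (hd : Odd d) {s t : ZMod d} (hst : s ^ 2 + t ^ 2 = 1)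
    (ρ σ : Mat d n) (x : PhSp d n) :
    charFun d n (qconv d n s t ρ σ) x
      = charFun d n ρ (sdot s x) * charFun d n σ (sdot t x) := by
  have lhs_eq : charFun d n (qconv d n s t ρ σ) x
      = ∑ a : Idx d n, ∑ b : Idx d n, ∑ a' : Idx d n,
          (convU d n s t * kron d n ρ σ * (convU d n s t)ᴴ) (a, b) (a', b)
            * weylP d n (-x) a' a := by
    rw [charFun, trace_mul_entries, Fintype.sum_prod_type]
    apply Finset.sum_congr rfl
    intro a _
    have hq : ∀ a' : Idx d n, qconv d n s t ρ σ a a' * weylP d n (-x) a' a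
        = ∑ b : Idx d n, (convU d n s t * kron d n ρ σ * (convU d n s t)ᴴ) (a, b) (a', b)
            * weylP d n (-x) a' a := by
      intro a'
      show (∑ b, (convU d n s t * kron d n ρ σ * (convU d n s t)ᴴ) (a, b) (a', b))
          * weylP d n (-x) a' a = _
      rw [Finset.sum_mul]
    rw [Finset.sum_congr rfl (fun a' _ => hq a'), Finset.sum_comm]
  have rhs_eq : ((convU d n s t * kron d n ρ σ * (convU d n s t)ᴴ)
        * kron d n (weylP d n (-x)) 1).trace
      = ∑ a : Idx d n, ∑ b : Idx d n, ∑ a' : Idx d n,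
          (convU d n s t * kron d n ρ σ * (convU d n s t)ᴴ) (a, b) (a', b)
            * weylP d n (-x) a' a := by
    rw [trace_mul_entries', Fintype.sum_prod_type]
    apply Finset.sum_congr rfl
    intro a _
    apply Finset.sum_congr rfl
    intro b _
    rw [Fintype.sum_prod_type]
    apply Finset.sum_congr rfl
    intro a' _
    rw [Finset.sum_eq_single b
      (fun b' _ hb' => by
        show _ * (weylP d n (-x) a' a * (1 : Mat d n) b' b) = 0
        rw [Matrix.one_apply, if_neg hb', mul_zero, mul_zero])
      (fun hmem => absurd (Finset.mem_univ _) hmem)]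
    show _ * (weylP d n (-x) a' a * (1 : Mat d n) b b) = _
    rw [Matrix.one_apply, if_pos rfl, mul_one]
  rw [lhs_eq, ← rhs_eq]
  have cyc : ((convU d n s t * kron d n ρ σ * (convU d n s t)ᴴ)
        * kron d n (weylP d n (-x)) 1).trace
      = (kron d n ρ σ * ((convU d n s t)ᴴ * kron d n (weylP d n (-x)) 1 * convU d n s t)).trace := by
    rw [show convU d n s t * kron d n ρ σ * (convU d n s t)ᴴ * kron d n (weylP d n (-x)) 1
        = (convU d n s t * kron d n ρ σ) * ((convU d n s t)ᴴ * kron d n (weylP d n (-x)) 1) by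
      simp only [Matrix.mul_assoc]]
    rw [Matrix.trace_mul_comm]
    rw [show (convU d n s t)ᴴ * kron d n (weylP d n (-x)) 1 * (convU d n s t * kron d n ρ σ)
        = ((convU d n s t)ᴴ * kron d n (weylP d n (-x)) 1 * convU d n s t) * kron d n ρ σ by
      simp only [Matrix.mul_assoc]]
    rw [Matrix.trace_mul_comm]
  rw [cyc, convU_conj_kron_weylP hd hst, sdot_neg, sdot_neg, kron_mul_kron, trace_kron]
  rfl

lemma qconv_trace [NeZero d] (hd : Odd d) {s t : ZMod d} (hst : s ^ 2 + t ^ 2 = 1)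
    (ρ σ : Mat d n) : (qconv d n s t ρ σ).trace = ρ.trace * σ.trace := by
  rw [← charFun_zero_eq_trace, ← charFun_zero_eq_trace (A := ρ), ← charFun_zero_eq_trace (A := σ),
    charFun_qconv hd hst, sdot_zero, sdot_zero]

lemma psd_eq_conjTranspose_mul_self' {I : Type} [Fintype I] [DecidableEq I]
    {A : Matrix I I ℂ} (h : A.PosSemidef) : ∃ B : Matrix I I ℂ, A = Bᴴ * B := by
  open MatrixOrder Matrix.Norms.L2Operator in
  obtain ⟨B, hB⟩ := CStarAlgebra.nonneg_iff_eq_star_mul_self.mp h.nonneg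
  exact ⟨B, hB⟩

lemma psd_sqrt_exists' {I : Type} [Fintype I] [DecidableEq I]
    {A : Matrix I I ℂ} (h : A.PosSemidef) : ∃ Q : Matrix I I ℂ, Q * Q = A ∧ Qᴴ = Q := by
  open MatrixOrder Matrix.Norms.L2Operator in
  obtain ⟨Q, hQ, hQQ⟩ := CStarAlgebra.nonneg_iff_exists_isSelfAdjoint_and_eq_mul_self.mp h.nonneg
  exact ⟨Q, hQQ.symm, hQ⟩

lemma kron_posSemidef [NeZero d] {ρ σ : Mat d n} (hρ : ρ.PosSemidef) (hσ : σ.PosSemidef) :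
    (kron d n ρ σ).PosSemidef := by
  obtain ⟨B, hB⟩ := psd_eq_conjTranspose_mul_self' hρ
  obtain ⟨C, hC⟩ := psd_eq_conjTranspose_mul_self' hσ
  have : kron d n ρ σ = (kron d n B C)ᴴ * kron d n B C := by
    rw [kron_conjTranspose, kron_mul_kron, ← hB, ← hC]
  rw [this]
  exact Matrix.posSemidef_conjTranspose_mul_self _

lemma qconv_posSemidef [NeZero d] {s t : ZMod d}
    {ρ σ : Mat d n} (hρ : ρ.PosSemidef) (hσ : σ.PosSemidef) :
    (qconv d n s t ρ σ).PosSemidef := by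
  have hN : (convU d n s t * kron d n ρ σ * (convU d n s t)ᴴ).PosSemidef :=
    (kron_posSemidef hρ hσ).mul_mul_conjTranspose_same (convU d n s t)
  refine Matrix.PosSemidef.of_dotProduct_mulVec_nonneg ?_ ?_
  · -- Hermitian
    ext a a'
    rw [Matrix.conjTranspose_apply]
    show star (∑ b, (convU d n s t * kron d n ρ σ * (convU d n s t)ᴴ) (a', b) (a, b))
        = ∑ b, (convU d n s t * kron d n ρ σ * (convU d n s t)ᴴ) (a, b) (a', b)
    rw [star_sum]
    apply Finset.sum_congr rfl
    intro b _
    rw [← Matrix.conjTranspose_apply, hN.1.eq]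
  · intro v
    have hterm : ∀ a : Idx d n, star v a * ((qconv d n s t ρ σ).mulVec v) a
        = ∑ b : Idx d n, ∑ a' : Idx d n,
            star (v a) * ((convU d n s t * kron d n ρ σ * (convU d n s t)ᴴ) (a, b) (a', b) * v a') := by
      intro a
      have h1 : ((qconv d n s t ρ σ).mulVec v) a
          = ∑ a', ∑ b, (convU d n s t * kron d n ρ σ * (convU d n s t)ᴴ) (a, b) (a', b) * v a' := by
        show (∑ a', (∑ b, (convU d n s t * kron d n ρ σ * (convU d n s t)ᴴ) (a, b) (a', b)) * v a') = _
        exact Finset.sum_congr rfl (fun a' _ => Finset.sum_mul _ _ _)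
      rw [Pi.star_apply, h1, Finset.mul_sum]
      have h2 : ∀ a' : Idx d n,
          star (v a) * (∑ b, (convU d n s t * kron d n ρ σ * (convU d n s t)ᴴ) (a, b) (a', b) * v a')
          = ∑ b, star (v a) * ((convU d n s t * kron d n ρ σ * (convU d n s t)ᴴ) (a, b) (a', b) * v a') :=
        fun a' => Finset.mul_sum _ _ _
      rw [Finset.sum_congr rfl (fun a' _ => h2 a'), Finset.sum_comm]
    have key : dotProduct (star v) ((qconv d n s t ρ σ).mulVec v)
        = ∑ b : Idx d n, ∑ a : Idx d n, ∑ a' : Idx d n,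
            star (v a) * ((convU d n s t * kron d n ρ σ * (convU d n s t)ᴴ) (a, b) (a', b) * v a') := by
      rw [dotProduct, Finset.sum_congr rfl (fun a _ => hterm a), Finset.sum_comm]
    have rhsb : ∀ b : Idx d n,
        dotProduct (star (fun P : Idx d n × Idx d n => if P.2 = b then v P.1 else 0))
          ((convU d n s t * kron d n ρ σ * (convU d n s t)ᴴ).mulVec
            (fun P : Idx d n × Idx d n => if P.2 = b then v P.1 else 0))
        = ∑ a : Idx d n, ∑ a' : Idx d n,
            star (v a) * ((convU d n s t * kron d n ρ σ * (convU d n s t)ᴴ) (a, b) (a', b) * v a') := by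
      intro b
      set w : Idx d n × Idx d n → ℂ := fun P => if P.2 = b then v P.1 else 0 with hw
      have hmv : ∀ p1 : Idx d n,
          ((convU d n s t * kron d n ρ σ * (convU d n s t)ᴴ).mulVec w) (p1, b)
          = ∑ a', (convU d n s t * kron d n ρ σ * (convU d n s t)ᴴ) (p1, b) (a', b) * v a' := by
        intro p1
        show (∑ Q : Idx d n × Idx d n,
            (convU d n s t * kron d n ρ σ * (convU d n s t)ᴴ) (p1, b) Q * w Q) = _
        rw [Fintype.sum_prod_type]
        have hq : ∀ q1 : Idx d n,
            (∑ q2, (convU d n s t * kron d n ρ σ * (convU d n s t)ᴴ) (p1, b) (q1, q2) * w (q1, q2))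
            = (convU d n s t * kron d n ρ σ * (convU d n s t)ᴴ) (p1, b) (q1, b) * v q1 := by
          intro q1
          rw [Finset.sum_eq_single b
            (fun q2 _ hq2 => by
              show _ * (if q2 = b then v q1 else 0) = 0
              rw [if_neg hq2, mul_zero])
            (fun hmem => absurd (Finset.mem_univ _) hmem)]
          show _ * (if b = b then v q1 else 0) = _
          rw [if_pos rfl]
        exact Finset.sum_congr rfl (fun q1 _ => hq q1)
      rw [dotProduct, Fintype.sum_prod_type]
      have hcol : ∀ p1 : Idx d n,
          (∑ p2, star (w (p1, p2)) * ((convU d n s t * kron d n ρ σ * (convU d n s t)ᴴ).mulVec w) (p1, p2))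
          = ∑ a', star (v p1) * ((convU d n s t * kron d n ρ σ * (convU d n s t)ᴴ) (p1, b) (a', b) * v a') := by
        intro p1
        rw [Finset.sum_eq_single b
          (fun p2 _ hp2 => by
            show star (if p2 = b then v p1 else 0) * _ = 0
            rw [if_neg hp2, star_zero, zero_mul])
          (fun hmem => absurd (Finset.mem_univ _) hmem)]
        show star (if b = b then v p1 else 0) * _ = _
        rw [if_pos rfl, hmv p1, Finset.mul_sum]
      have hps : ∀ p1 p2, star w (p1, p2) = star (w (p1, p2)) := fun _ _ => rfl
      rw [Finset.sum_congr rfl (fun p1 (_ : p1 ∈ Finset.univ) =>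
        Finset.sum_congr rfl (fun p2 _ => by rw [hps p1 p2]))]
      exact Finset.sum_congr rfl (fun p1 _ => hcol p1)
    rw [key]
    apply Finset.sum_nonneg
    intro b _
    rw [← rhsb b]
    exact hN.dotProduct_mulVec_nonneg _

lemma qconv_isState [NeZero d] (hd : Odd d) {s t : ZMod d} (hst : s ^ 2 + t ^ 2 = 1)
    {ρ σ : Mat d n} (hρ : IsState d n ρ) (hσ : IsState d n σ) :
    IsState d n (qconv d n s t ρ σ) :=
  ⟨qconv_posSemidef hρ.1 hσ.1, by rw [qconv_trace hd hst, hρ.2, hσ.2, mul_one]⟩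

lemma boxPow_isState [NeZero d] (hd : Odd d) {s t : ZMod d} (hst : s ^ 2 + t ^ 2 = 1)
    {ρ : Mat d n} (hρ : IsState d n ρ) (m : ℕ) : IsState d n (boxPow d n s t ρ m) := by
  induction m with
  | zero => exact hρ
  | succ k ih => exact qconv_isState hd hst ih hρ

end Conv

section ZeroTrick

variable {d n : ℕ}

lemma eq_zero_of_trace_conjTranspose_mul_self [NeZero d] {C : Mat d n}
    (h : (Cᴴ * C).trace = 0) : C = 0 := by
  have hre : ((Cᴴ * C).trace) = ((∑ k : Idx d n, ∑ j : Idx d n, Complex.normSq (C j k) : ℝ) : ℂ) := by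
    rw [Matrix.trace]
    push_cast
    apply Finset.sum_congr rfl
    intro k _
    rw [Matrix.diag_apply, Matrix.mul_apply]
    apply Finset.sum_congr rfl
    intro j _
    rw [Matrix.conjTranspose_apply]
    rw [show (star (C j k) : ℂ) = (starRingEnd ℂ) (C j k) from rfl]
    rw [mul_comm, Complex.mul_conj]
  rw [hre] at h
  have hsum : (∑ k : Idx d n, ∑ j : Idx d n, Complex.normSq (C j k) : ℝ) = 0 := by
    exact_mod_cast h
  have hnn : ∀ k ∈ (Finset.univ : Finset (Idx d n)),
      0 ≤ ∑ j : Idx d n, Complex.normSq (C j k) :=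
    fun k _ => Finset.sum_nonneg (fun j _ => Complex.normSq_nonneg _)
  ext j k
  have h1 := (Finset.sum_eq_zero_iff_of_nonneg hnn).mp hsum k (Finset.mem_univ k)
  have h2 := (Finset.sum_eq_zero_iff_of_nonneg
    (fun j _ => Complex.normSq_nonneg (C j k))).mp h1 j (Finset.mem_univ j)
  simpa using Complex.normSq_eq_zero.mp h2

lemma state_absorb_unitary [NeZero d] {ρ B : Mat d n} (hρp : ρ.PosSemidef)
    (hρt : ρ.trace = 1) (hB1 : B * Bᴴ = 1) (htr : (ρ * B).trace = 1) :
    ρ * B = ρ := by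
  obtain ⟨Q, hQQ, hQH⟩ := psd_sqrt_exists' hρp
  have hexp : (Q * (1 - B))ᴴ * (Q * (1 - B)) = (1 - Bᴴ) * (ρ * (1 - B)) := by
    calc (Q * (1 - B))ᴴ * (Q * (1 - B)) = ((1 - B)ᴴ * Qᴴ) * (Q * (1 - B)) := by
          rw [Matrix.conjTranspose_mul]
      _ = (1 - B)ᴴ * ((Qᴴ * Q) * (1 - B)) := by simp only [Matrix.mul_assoc]
      _ = (1 - Bᴴ) * (ρ * (1 - B)) := by
          rw [hQH, hQQ, Matrix.conjTranspose_sub, Matrix.conjTranspose_one]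
  have h3 : (Bᴴ * ρ).trace = 1 := by
    have : Bᴴ * ρ = (ρ * B)ᴴ := by rw [Matrix.conjTranspose_mul, hρp.1.eq]
    rw [this, Matrix.trace_conjTranspose, htr, star_one]
  have h4 : (Bᴴ * (ρ * B)).trace = 1 := by
    have hassoc : Bᴴ * (ρ * B) = Bᴴ * ρ * B := by rw [Matrix.mul_assoc]
    rw [hassoc, Matrix.trace_mul_cycle, hB1, Matrix.one_mul, hρt]
  have htr0 : ((Q * (1 - B))ᴴ * (Q * (1 - B))).trace = 0 := by
    rw [hexp]
    have hring : (1 - Bᴴ) * (ρ * (1 - B)) = ρ - ρ * B - (Bᴴ * ρ - Bᴴ * (ρ * B)) := by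
      noncomm_ring
    rw [hring, Matrix.trace_sub, Matrix.trace_sub, Matrix.trace_sub, hρt, htr, h3, h4]
    ring
  have hC0 : Q * (1 - B) = 0 := eq_zero_of_trace_conjTranspose_mul_self htr0
  have : ρ * (1 - B) = 0 := by
    calc ρ * (1 - B) = (Q * Q) * (1 - B) := by rw [hQQ]
      _ = Q * (Q * (1 - B)) := by rw [Matrix.mul_assoc]
      _ = 0 := by rw [hC0, Matrix.mul_zero]
  have := sub_eq_zero.mp (by rwa [Matrix.mul_sub, Matrix.mul_one] at this)
  exact this.symm

lemma state_absorb_proj [NeZero d] {σ P : Mat d n} (hσp : σ.PosSemidef)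
    (hσt : σ.trace = 1) (hPH : Pᴴ = P) (hP2 : P * P = P) (htr : (σ * P).trace = 1) :
    σ * P = σ := by
  obtain ⟨Q, hQQ, hQH⟩ := psd_sqrt_exists' hσp
  have hexp : (Q * (1 - P))ᴴ * (Q * (1 - P)) = (1 - P) * (σ * (1 - P)) := by
    calc (Q * (1 - P))ᴴ * (Q * (1 - P)) = ((1 - P)ᴴ * Qᴴ) * (Q * (1 - P)) := by
          rw [Matrix.conjTranspose_mul]
      _ = (1 - P)ᴴ * ((Qᴴ * Q) * (1 - P)) := by simp only [Matrix.mul_assoc]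
      _ = (1 - P) * (σ * (1 - P)) := by
          rw [hQH, hQQ, Matrix.conjTranspose_sub, Matrix.conjTranspose_one, hPH]
  have htr0 : ((Q * (1 - P))ᴴ * (Q * (1 - P))).trace = 0 := by
    rw [hexp]
    have hcyc : ((1 - P) * (σ * (1 - P))).trace = (σ * ((1 - P) * (1 - P))).trace := by
      rw [← Matrix.mul_assoc, Matrix.trace_mul_cycle, Matrix.trace_mul_comm]
    have hsq : (1 - P) * (1 - P) = 1 - P := by
      rw [Matrix.mul_sub, Matrix.mul_one, Matrix.sub_mul, Matrix.one_mul, hP2]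
      abel
    rw [hcyc, hsq, Matrix.mul_sub, Matrix.mul_one, Matrix.trace_sub, hσt, htr]
    ring
  have hC0 : Q * (1 - P) = 0 := eq_zero_of_trace_conjTranspose_mul_self htr0
  have : σ * (1 - P) = 0 := by
    calc σ * (1 - P) = (Q * Q) * (1 - P) := by rw [hQQ]
      _ = Q * (Q * (1 - P)) := by rw [Matrix.mul_assoc]
      _ = 0 := by rw [hC0, Matrix.mul_zero]
  have := sub_eq_zero.mp (by rwa [Matrix.mul_sub, Matrix.mul_one] at this)
  exact this.symm

end ZeroTrick

section SSet

variable {d n : ℕ}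

/-- The stabilizer support of `ρ`: points where `|Ξ_ρ| = 1`. -/
def Sfin [NeZero d] (ρ : Mat d n) : Finset (PhSp d n) :=
  Finset.univ.filter (fun x => ‖charFun d n ρ x‖ = 1)

lemma mem_Sfin_iff [NeZero d] {ρ : Mat d n} {x : PhSp d n} :
    x ∈ Sfin ρ ↔ ‖charFun d n ρ x‖ = 1 := by
  rw [Sfin, Finset.mem_filter]
  exact ⟨fun h => h.2, fun h => ⟨Finset.mem_univ x, h⟩⟩

lemma charFun_one_of_mem [NeZero d] (hd : Odd d) {ρ : Mat d n}
    (hzm : ZeroMean d n ρ) {x : PhSp d n} (hx : x ∈ Sfin ρ) :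
    charFun d n ρ x = 1 := by
  have h1 := charFun_meanState_eq hd ρ x
  rw [if_pos (mem_Sfin_iff.mp hx)] at h1
  rcases hzm x with h | h
  · rw [h] at h1
    have := mem_Sfin_iff.mp hx
    rw [← h1] at this
    simp at this
  · rw [h] at h1
    exact h1.symm

lemma rho_mul_weylP [NeZero d] (hd : Odd d) {ρ : Mat d n} (hρ : IsState d n ρ)
    (hzm : ZeroMean d n ρ) {x : PhSp d n} (hx : x ∈ Sfin ρ) :
    ρ * weylP d n (-x) = ρ := by
  apply state_absorb_unitary hρ.1 hρ.2
  · rw [weylP_conjTranspose hd, neg_neg, weylP_neg_mul hd]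
  · exact charFun_one_of_mem hd hzm hx

lemma zero_mem_Sfin [NeZero d] {ρ : Mat d n} (hρ : IsState d n ρ) :
    (0 : PhSp d n) ∈ Sfin ρ := by
  rw [mem_Sfin_iff, charFun_zero_eq_trace, hρ.2]
  simp

lemma add_mem_Sfin [NeZero d] (hd : Odd d) {ρ : Mat d n} (hρ : IsState d n ρ)
    (hzm : ZeroMean d n ρ) {x y : PhSp d n} (hx : x ∈ Sfin ρ) (hy : y ∈ Sfin ρ) :
    x + y ∈ Sfin ρ ∧ qphase d (hf d * symp x y) = 1 := by
  have h1 : weylP d n (-x) * weylP d n (-y)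
      = qphase d (hf d * symp x y) • weylP d n (-(x + y)) := by
    rw [weylP_mul hd]
    have hsymp : symp (-x) (-y) = symp x y := by
      rw [symp, symp]
      apply Finset.sum_congr rfl
      intro i _
      show (-x).1 i * (-y).2 i - (-y).1 i * (-x).2 i = _
      show -(x.1 i) * -(y.2 i) - -(y.1 i) * -(x.2 i) = _
      ring
    rw [hsymp, neg_add]
  have h2 : ρ * (weylP d n (-x) * weylP d n (-y)) = ρ := by
    rw [← Matrix.mul_assoc, rho_mul_weylP hd hρ hzm hx, rho_mul_weylP hd hρ hzm hy]
  rw [h1, Matrix.mul_smul] at h2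
  have h3 : qphase d (hf d * symp x y) * charFun d n ρ (x + y) = 1 := by
    have := congrArg Matrix.trace h2
    rw [Matrix.trace_smul, smul_eq_mul, hρ.2] at this
    exact this
  have habs : ‖charFun d n ρ (x + y)‖ = 1 := by
    have h4 := congrArg (fun z : ℂ => ‖z‖) h3
    rw [norm_mul, abs_qphase, one_mul, norm_one] at h4
    exact h4
  have hmem : x + y ∈ Sfin ρ := mem_Sfin_iff.mpr habs
  refine ⟨hmem, ?_⟩
  rw [charFun_one_of_mem hd hzm hmem, mul_one] at h3
  exact h3

lemma symp_eq_zero_of_mem [NeZero d] [Fact (Nat.Prime d)] (hd : Odd d) {ρ : Mat d n}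
    (hρ : IsState d n ρ) (hzm : ZeroMean d n ρ) {x y : PhSp d n}
    (hx : x ∈ Sfin ρ) (hy : y ∈ Sfin ρ) : symp x y = 0 := by
  have h := (add_mem_Sfin hd hρ hzm hx hy).2
  rw [qphase_eq_one_iff] at h
  haveI : Fact (1 < d) := ⟨(Fact.out (p := d.Prime)).one_lt⟩
  have hhf : hf d ≠ 0 := hf_ne_zero hd one_ne_zero
  exact (mul_eq_zero.mp h).resolve_left hhf

lemma neg_mem_Sfin [NeZero d] (hd : Odd d) {ρ : Mat d n} (hρ : IsState d n ρ)
    (hzm : ZeroMean d n ρ) {x : PhSp d n} (hx : x ∈ Sfin ρ) : -x ∈ Sfin ρ := by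
  have h1 : ρ * weylP d n (-(-x)) = ρ := by
    rw [neg_neg]
    calc ρ * weylP d n x = (ρ * weylP d n (-x)) * weylP d n x := by
          rw [rho_mul_weylP hd hρ hzm hx]
      _ = ρ * (weylP d n (-x) * weylP d n x) := by rw [Matrix.mul_assoc]
      _ = ρ := by rw [weylP_neg_mul hd, Matrix.mul_one]
  rw [mem_Sfin_iff]
  have : charFun d n ρ (-x) = 1 := by
    rw [charFun, h1, hρ.2]
  rw [this]
  simp

lemma sdot_zero_left (x : PhSp d n) : sdot (0 : ZMod d) x = 0 := by
  apply Prod.ext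
  · funext i; show (0 : ZMod d) * x.1 i = 0; ring
  · funext i; show (0 : ZMod d) * x.2 i = 0; ring

lemma sdot_add_one (c : ZMod d) (x : PhSp d n) : sdot (c + 1) x = sdot c x + x := by
  apply Prod.ext
  · funext i; show (c + 1) * x.1 i = c * x.1 i + x.1 i; ring
  · funext i; show (c + 1) * x.2 i = c * x.2 i + x.2 i; ring

lemma sdot_mem_Sfin [NeZero d] (hd : Odd d) {ρ : Mat d n} (hρ : IsState d n ρ)
    (hzm : ZeroMean d n ρ) {x : PhSp d n} (hx : x ∈ Sfin ρ) (a : ZMod d) :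
    sdot a x ∈ Sfin ρ := by
  have hnat : ∀ m : ℕ, sdot ((m : ZMod d)) x ∈ Sfin ρ := by
    intro m
    induction m with
    | zero =>
        rw [Nat.cast_zero, sdot_zero_left]
        exact zero_mem_Sfin hρ
    | succ k ih =>
        rw [Nat.cast_succ, sdot_add_one]
        exact (add_mem_Sfin hd hρ hzm ih hx).1
  have := hnat a.val
  rwa [ZMod.natCast_rightInverse a] at this

end SSet

section MeanStruct

variable {d n : ℕ}

lemma meanState_eq [NeZero d] (hd : Odd d) {ρ : Mat d n} (hzm : ZeroMean d n ρ) :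
    meanState d n ρ = ((d : ℂ) ^ n)⁻¹ • ∑ x ∈ Sfin ρ, weylP d n x := by
  rw [meanState]
  congr 1
  have h1 : ∀ x : PhSp d n,
      (if ‖charFun d n ρ x‖ = 1 then charFun d n ρ x else 0) • weylP d n x
      = if ‖charFun d n ρ x‖ = 1 then weylP d n x else 0 := by
    intro x
    by_cases h : ‖charFun d n ρ x‖ = 1
    · rw [if_pos h, if_pos h, charFun_one_of_mem hd hzm (mem_Sfin_iff.mpr h), one_smul]
    · rw [if_neg h, if_neg h, zero_smul]
  rw [Finset.sum_congr rfl (fun x _ => h1 x), ← Finset.sum_filter]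
  rfl

lemma meanState_isHermitian [NeZero d] (hd : Odd d) {ρ : Mat d n} (hρ : IsState d n ρ)
    (hzm : ZeroMean d n ρ) : (meanState d n ρ).IsHermitian := by
  show (meanState d n ρ)ᴴ = meanState d n ρ
  rw [meanState_eq hd hzm, Matrix.conjTranspose_smul, Matrix.conjTranspose_sum]
  have hstar : (star (((d : ℂ) ^ n)⁻¹) : ℂ) = ((d : ℂ) ^ n)⁻¹ := by
    rw [star_inv₀, star_pow]
    norm_cast
  rw [hstar]
  congr 1
  rw [Finset.sum_congr rfl (fun x (_ : x ∈ Sfin ρ) => weylP_conjTranspose hd x)]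
  exact Finset.sum_nbij' (fun x => -x) (fun x => -x)
    (fun x hx => neg_mem_Sfin hd hρ hzm hx)
    (fun x hx => neg_mem_Sfin hd hρ hzm hx)
    (fun x _ => neg_neg x) (fun x _ => neg_neg x)
    (fun x _ => rfl)

lemma meanState_mul_weylP [NeZero d] (hd : Odd d) {ρ : Mat d n} (hρ : IsState d n ρ)
    (hzm : ZeroMean d n ρ) [Fact (Nat.Prime d)] {y : PhSp d n} (hy : y ∈ Sfin ρ) :
    meanState d n ρ * weylP d n y = meanState d n ρ := by
  rw [meanState_eq hd hzm, Matrix.smul_mul, Matrix.sum_mul]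
  congr 1
  have h1 : ∀ x ∈ Sfin ρ, weylP d n x * weylP d n y = weylP d n (x + y) := by
    intro x hx
    rw [weylP_mul hd, symp_eq_zero_of_mem hd hρ hzm hx hy, mul_zero, qphase_zero, one_smul]
  rw [Finset.sum_congr rfl h1]
  exact Finset.sum_nbij' (fun x => x + y) (fun x => x - y)
    (fun x hx => (add_mem_Sfin hd hρ hzm hx hy).1)
    (fun x hx => by
      show x - y ∈ Sfin ρ
      rw [sub_eq_add_neg]
      exact (add_mem_Sfin hd hρ hzm hx (neg_mem_Sfin hd hρ hzm hy)).1)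
    (fun x _ => add_sub_cancel_right x y) (fun x _ => sub_add_cancel x y)
    (fun x _ => rfl)

lemma meanState_sq [NeZero d] [Fact (Nat.Prime d)] (hd : Odd d) {ρ : Mat d n}
    (hρ : IsState d n ρ) (hzm : ZeroMean d n ρ) :
    meanState d n ρ * meanState d n ρ
      = ((((Sfin ρ).card : ℂ)) * ((d : ℂ) ^ n)⁻¹) • meanState d n ρ := by
  conv_lhs => rw [show meanState d n ρ * meanState d n ρ
    = meanState d n ρ * (((d : ℂ) ^ n)⁻¹ • ∑ x ∈ Sfin ρ, weylP d n x) by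
      rw [← meanState_eq hd hzm]]
  rw [Matrix.mul_smul, Matrix.mul_sum]
  rw [Finset.sum_congr rfl (fun y hy => meanState_mul_weylP hd hρ hzm hy)]
  rw [Finset.sum_const]
  rw [show ((Sfin ρ).card • meanState d n ρ) = (((Sfin ρ).card : ℂ)) • meanState d n ρ from
    (Nat.cast_smul_eq_nsmul ℂ _ _).symm]
  rw [smul_smul]
  congr 1
  ring

lemma trace_meanState [NeZero d] (hd : Odd d) {ρ : Mat d n} (hρ : IsState d n ρ) :
    (meanState d n ρ).trace = 1 := by
  rw [← charFun_zero_eq_trace, charFun_meanState_eq hd, charFun_zero_eq_trace, hρ.2]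
  rw [if_pos (by simp)]

lemma card_Sfin_pos [NeZero d] {ρ : Mat d n} (hρ : IsState d n ρ) :
    0 < (Sfin ρ).card :=
  Finset.card_pos.mpr ⟨0, zero_mem_Sfin hρ⟩

lemma gammac_ne_zero [NeZero d] {ρ : Mat d n} (hρ : IsState d n ρ) :
    (((Sfin ρ).card : ℂ)) * ((d : ℂ) ^ n)⁻¹ ≠ 0 := by
  have h := card_Sfin_pos hρ
  apply mul_ne_zero
  · exact Nat.cast_ne_zero.mpr (by omega)
  · exact inv_ne_zero (pow_ne_zero _ dC_ne_zero)

lemma trace_eq_sum_eigenvalues {I : Type} [Fintype I] [DecidableEq I]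
    {A : Matrix I I ℂ} (hA : A.IsHermitian) :
    A.trace = ∑ i, (hA.eigenvalues i : ℂ) := by
  exact hA.trace_eq_sum_eigenvalues

lemma meanState_eigenvalues_mem [NeZero d] [Fact (Nat.Prime d)] (hd : Odd d) {ρ : Mat d n}
    (hρ : IsState d n ρ) (hzm : ZeroMean d n ρ) (i : Idx d n) :
    ((meanState_isHermitian hd hρ hzm).eigenvalues i : ℂ) = 0 ∨
    ((meanState_isHermitian hd hρ hzm).eigenvalues i : ℂ)
      = (((Sfin ρ).card : ℂ)) * ((d : ℂ) ^ n)⁻¹ := by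
  set hM := meanState_isHermitian hd hρ hzm with hMdef
  obtain ⟨v, hv, hvne⟩ : ∃ v : Idx d n → ℂ,
      (meanState d n ρ *ᵥ v = hM.eigenvalues i • v) ∧ v ≠ 0 := by
    refine ⟨_, hM.mulVec_eigenvectorBasis i, ?_⟩
    intro hc
    exact hM.eigenvectorBasis.orthonormal.ne_zero i (by simpa using hc)
  have h2 : (meanState d n ρ * meanState d n ρ) *ᵥ v
      = (hM.eigenvalues i * hM.eigenvalues i) • v := by
    rw [← Matrix.mulVec_mulVec, hv, Matrix.mulVec_smul, hv, smul_smul]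
  have h3 : (meanState d n ρ * meanState d n ρ) *ᵥ v
      = ((((Sfin ρ).card : ℂ)) * ((d : ℂ) ^ n)⁻¹) • (hM.eigenvalues i • v) := by
    rw [meanState_sq hd hρ hzm, Matrix.smul_mulVec, hv]
  obtain ⟨j, hj⟩ := Function.ne_iff.mp hvne
  have h4 := (congrFun h2 j).symm.trans (congrFun h3 j)
  have h5 : ((hM.eigenvalues i * hM.eigenvalues i : ℝ) : ℂ) * v j
      = (((Sfin ρ).card : ℂ)) * ((d : ℂ) ^ n)⁻¹ * (((hM.eigenvalues i : ℝ) : ℂ) * v j) := by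
    rw [← Complex.real_smul, ← Complex.real_smul]
    exact h4
  have hj0 : v j ≠ 0 := by simpa using hj
  have h6 : ((hM.eigenvalues i : ℂ)) * ((hM.eigenvalues i : ℂ)
      - (((Sfin ρ).card : ℂ)) * ((d : ℂ) ^ n)⁻¹) = 0 := by
    apply mul_right_cancel₀ hj0
    push_cast at h5 ⊢
    linear_combination h5
  rcases mul_eq_zero.mp h6 with h | h
  · left; exact h
  · right; linear_combination h

lemma mrank_mul_gamma [NeZero d] [Fact (Nat.Prime d)] (hd : Odd d) {ρ : Mat d n}
    (hρ : IsState d n ρ) (hzm : ZeroMean d n ρ) :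
    ((mrank d n ρ : ℂ)) * ((((Sfin ρ).card : ℂ)) * ((d : ℂ) ^ n)⁻¹) = 1 := by
  set hM := meanState_isHermitian hd hρ hzm
  have htr : (meanState d n ρ).trace = ∑ i, (hM.eigenvalues i : ℂ) :=
    trace_eq_sum_eigenvalues hM
  rw [trace_meanState hd hρ] at htr
  have hrank : mrank d n ρ = (Finset.univ.filter (fun i => hM.eigenvalues i ≠ 0)).card := by
    rw [mrank, hM.rank_eq_card_non_zero_eigs, Fintype.card_subtype]
  have hsplit : (∑ i, (hM.eigenvalues i : ℂ))
      = ∑ i ∈ Finset.univ.filter (fun i => hM.eigenvalues i ≠ 0), (hM.eigenvalues i : ℂ) := by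
    rw [Finset.sum_filter_of_ne]
    intro i _ hne
    intro hc
    rw [hc] at hne
    simp at hne
  have hval : ∀ i ∈ Finset.univ.filter (fun i => hM.eigenvalues i ≠ 0),
      (hM.eigenvalues i : ℂ) = (((Sfin ρ).card : ℂ)) * ((d : ℂ) ^ n)⁻¹ := by
    intro i hi
    rcases meanState_eigenvalues_mem hd hρ hzm i with h | h
    · exfalso
      have := (Finset.mem_filter.mp hi).2
      exact this (by exact_mod_cast h)
    · exact h
  rw [hsplit, Finset.sum_congr rfl hval, Finset.sum_const, ← Nat.cast_smul_eq_nsmul ℂ, smul_eq_mul] at htr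
  rw [hrank]
  exact htr.symm

end MeanStruct

section Decay

variable {d n : ℕ}

lemma sdot_sdot (a b : ZMod d) (x : PhSp d n) : sdot a (sdot b x) = sdot (a * b) x := by
  apply Prod.ext
  · funext i; show a * (b * x.1 i) = (a * b) * x.1 i; ring
  · funext i; show a * (b * x.2 i) = (a * b) * x.2 i; ring

lemma sdot_one (x : PhSp d n) : sdot (1 : ZMod d) x = x := by
  apply Prod.ext
  · funext i; show (1 : ZMod d) * x.1 i = x.1 i; ring
  · funext i; show (1 : ZMod d) * x.2 i = x.2 i; ring

lemma sdot_not_mem_Sfin [NeZero d] [Fact (Nat.Prime d)] (hd : Odd d) {ρ : Mat d n}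
    (hρ : IsState d n ρ) (hzm : ZeroMean d n ρ) {a : ZMod d} (ha : a ≠ 0) {x : PhSp d n}
    (hx : x ∉ Sfin ρ) : sdot a x ∉ Sfin ρ := by
  intro hc
  apply hx
  have := sdot_mem_Sfin hd hρ hzm hc a⁻¹
  rwa [sdot_sdot, inv_mul_cancel₀ ha, sdot_one] at this

lemma one_sub_magicGap_nonneg [NeZero d] (ρ : Mat d n) : 0 ≤ 1 - magicGap d n ρ := by
  rw [magicGap]
  split_ifs with h
  · rw [sub_sub_cancel]
    obtain ⟨t0, ht0⟩ := h
    exact le_trans (norm_nonneg _)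
      (Finset.le_sup' (fun y => ‖charFun d n ρ y‖) ht0)
  · norm_num

lemma abs_charFun_le_gap [NeZero d] {ρ : Mat d n} {x : PhSp d n} (hx : x ∉ Sfin ρ) :
    ‖charFun d n ρ x‖ ≤ 1 - magicGap d n ρ := by
  by_cases hz : charFun d n ρ x = 0
  · rw [hz]
    simpa using one_sub_magicGap_nonneg ρ
  · have habs : ‖charFun d n ρ x‖ ≠ 1 := fun hc => hx (mem_Sfin_iff.mpr hc)
    have hmem : x ∈ Finset.univ.filter
        (fun y : PhSp d n => charFun d n ρ y ≠ 0 ∧ ‖charFun d n ρ y‖ ≠ 1) :=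
      Finset.mem_filter.mpr ⟨Finset.mem_univ x, hz, habs⟩
    rw [magicGap]
    rw [dif_pos ⟨x, hmem⟩, sub_sub_cancel]
    exact Finset.le_sup' (fun y => ‖charFun d n ρ y‖) hmem

lemma charFun_boxPow_one [NeZero d] [Fact (Nat.Prime d)] (hd : Odd d) {s t : ZMod d}
    (hst : s ^ 2 + t ^ 2 = 1) {ρ : Mat d n} (hρ : IsState d n ρ) (hzm : ZeroMean d n ρ)
    (m : ℕ) {x : PhSp d n} (hx : x ∈ Sfin ρ) :
    charFun d n (boxPow d n s t ρ m) x = 1 := by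
  induction m generalizing x with
  | zero => exact charFun_one_of_mem hd hzm hx
  | succ k ih =>
      show charFun d n (qconv d n s t (boxPow d n s t ρ k) ρ) x = 1
      rw [charFun_qconv hd hst, ih (sdot_mem_Sfin hd hρ hzm hx s),
        charFun_one_of_mem hd hzm (sdot_mem_Sfin hd hρ hzm hx t), one_mul]

lemma charFun_boxPow_decay [NeZero d] [Fact (Nat.Prime d)] (hd : Odd d) {s t : ZMod d}
    (hs : s ≠ 0) (ht : t ≠ 0) (hst : s ^ 2 + t ^ 2 = 1) {ρ : Mat d n} (hρ : IsState d n ρ)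
    (hzm : ZeroMean d n ρ) (m : ℕ) {x : PhSp d n} (hx : x ∉ Sfin ρ) :
    ‖charFun d n (boxPow d n s t ρ m) x‖
      ≤ (1 - magicGap d n ρ) ^ m * ‖charFun d n ρ (sdot (s ^ m) x)‖ := by
  induction m generalizing x with
  | zero =>
      rw [pow_zero, pow_zero, one_mul, sdot_one]
      exact le_rfl
  | succ k ih =>
      show ‖charFun d n (qconv d n s t (boxPow d n s t ρ k) ρ) x‖ ≤ _
      rw [charFun_qconv hd hst, norm_mul]
      have h1 : ‖charFun d n (boxPow d n s t ρ k) (sdot s x)‖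
          ≤ (1 - magicGap d n ρ) ^ k * ‖charFun d n ρ (sdot (s ^ k) (sdot s x))‖ :=
        ih (sdot_not_mem_Sfin hd hρ hzm hs hx)
      rw [sdot_sdot, ← pow_succ] at h1
      have h2 : ‖charFun d n ρ (sdot t x)‖ ≤ 1 - magicGap d n ρ :=
        abs_charFun_le_gap (sdot_not_mem_Sfin hd hρ hzm ht hx)
      calc ‖charFun d n (boxPow d n s t ρ k) (sdot s x)‖
            * ‖charFun d n ρ (sdot t x)‖
          ≤ ((1 - magicGap d n ρ) ^ k * ‖charFun d n ρ (sdot (s ^ (k+1)) x)‖)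
            * (1 - magicGap d n ρ) := by
            apply mul_le_mul h1 h2 (norm_nonneg _)
            exact mul_nonneg (pow_nonneg (one_sub_magicGap_nonneg ρ) k)
              (norm_nonneg _)
        _ = (1 - magicGap d n ρ) ^ (k + 1) * ‖charFun d n ρ (sdot (s ^ (k+1)) x)‖ := by
            rw [pow_succ]
            ring

end Decay

section Frob

variable {d n : ℕ}

lemma trace_sq_eq_sum_normSq [NeZero d] (hd : Odd d) {A : Mat d n} (hA : A.IsHermitian) :
    ((A * A).trace)
      = ((((d : ℝ) ^ n)⁻¹ * ∑ x : PhSp d n, Complex.normSq (charFun d n A x) : ℝ) : ℂ) := by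
  rw [trace_mul_eq_sum_charFun hd A A]
  have h1 : ∀ x : PhSp d n, charFun d n A x * charFun d n A (-x)
      = ((Complex.normSq (charFun d n A x) : ℝ) : ℂ) := by
    intro x
    rw [charFun_neg_of_hermitian hd hA]
    rw [show (star (charFun d n A x) : ℂ) = (starRingEnd ℂ) (charFun d n A x) from rfl]
    rw [Complex.mul_conj]
  rw [Finset.sum_congr rfl (fun x _ => h1 x)]
  push_cast
  rfl

lemma traceNorm_le_sqrt_rank [NeZero d] (A : Mat d n) {R : ℕ} (hR : A.rank ≤ R) :
    traceNorm A ≤ Real.sqrt R * Real.sqrt (((Aᴴ * A).trace).re) := by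
  have hps := Matrix.posSemidef_conjTranspose_mul_self A
  set h : (Aᴴ * A).IsHermitian := Matrix.isHermitian_conjTranspose_mul_self A with hh
  have hnn : ∀ i, 0 ≤ h.eigenvalues i := fun i => hps.eigenvalues_nonneg i
  have htr : ((Aᴴ * A).trace).re = ∑ i, h.eigenvalues i := by
    rw [trace_eq_sum_eigenvalues h, Complex.re_sum]
    exact Finset.sum_congr rfl (fun i _ => Complex.ofReal_re _)
  have htrnn : 0 ≤ ((Aᴴ * A).trace).re := by
    rw [htr]
    exact Finset.sum_nonneg (fun i _ => hnn i)
  have hcard : (Finset.univ.filter (fun i => h.eigenvalues i ≠ 0)).card = A.rank := by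
    rw [← Matrix.rank_conjTranspose_mul_self A, h.rank_eq_card_non_zero_eigs,
      Fintype.card_subtype]
  have hsum_eq : (∑ i, Real.sqrt (h.eigenvalues i))
      = ∑ i ∈ Finset.univ.filter (fun i => h.eigenvalues i ≠ 0), Real.sqrt (h.eigenvalues i) := by
    rw [Finset.sum_filter_of_ne]
    intro i _ hne hc
    rw [hc, Real.sqrt_zero] at hne
    exact hne rfl
  have hCS : (∑ i ∈ Finset.univ.filter (fun i => h.eigenvalues i ≠ 0),
        Real.sqrt (h.eigenvalues i)) ^ 2
      ≤ ((R : ℝ)) * ((Aᴴ * A).trace).re := by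
    calc (∑ i ∈ Finset.univ.filter (fun i => h.eigenvalues i ≠ 0),
          Real.sqrt (h.eigenvalues i)) ^ 2
        ≤ ((Finset.univ.filter (fun i => h.eigenvalues i ≠ 0)).card : ℝ)
          * ∑ i ∈ Finset.univ.filter (fun i => h.eigenvalues i ≠ 0),
              Real.sqrt (h.eigenvalues i) ^ 2 := sq_sum_le_card_mul_sum_sq
      _ ≤ ((R : ℝ)) * ∑ i ∈ Finset.univ.filter (fun i => h.eigenvalues i ≠ 0),
              Real.sqrt (h.eigenvalues i) ^ 2 := by
          apply mul_le_mul_of_nonneg_right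
          · exact_mod_cast (hcard ▸ hR)
          · exact Finset.sum_nonneg (fun i _ => sq_nonneg _)
      _ = ((R : ℝ)) * ∑ i ∈ Finset.univ.filter (fun i => h.eigenvalues i ≠ 0),
              h.eigenvalues i := by
          congr 1
          exact Finset.sum_congr rfl (fun i _ => Real.sq_sqrt (hnn i))
      _ ≤ ((R : ℝ)) * ∑ i, h.eigenvalues i := by
          apply mul_le_mul_of_nonneg_left _ (Nat.cast_nonneg R)
          apply Finset.sum_le_sum_of_subset_of_nonneg (Finset.filter_subset _ _)
          exact fun i _ _ => hnn i
      _ = ((R : ℝ)) * ((Aᴴ * A).trace).re := by rw [htr]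
  have hnorm : traceNorm A = ∑ i, Real.sqrt (h.eigenvalues i) := rfl
  rw [hnorm, hsum_eq]
  have hs0 : 0 ≤ ∑ i ∈ Finset.univ.filter (fun i => h.eigenvalues i ≠ 0),
      Real.sqrt (h.eigenvalues i) :=
    Finset.sum_nonneg (fun i _ => Real.sqrt_nonneg _)
  calc (∑ i ∈ Finset.univ.filter (fun i => h.eigenvalues i ≠ 0), Real.sqrt (h.eigenvalues i))
      = Real.sqrt ((∑ i ∈ Finset.univ.filter (fun i => h.eigenvalues i ≠ 0),
          Real.sqrt (h.eigenvalues i)) ^ 2) := (Real.sqrt_sq hs0).symm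
    _ ≤ Real.sqrt (((R : ℝ)) * ((Aᴴ * A).trace).re) := Real.sqrt_le_sqrt hCS
    _ = Real.sqrt R * Real.sqrt (((Aᴴ * A).trace).re) := Real.sqrt_mul (Nat.cast_nonneg R) _

end Frob

section Support

variable {d n : ℕ}

lemma trace_boxPow_mul_meanState [NeZero d] [Fact (Nat.Prime d)] (hd : Odd d)
    {s t : ZMod d} (hst : s ^ 2 + t ^ 2 = 1) {ρ : Mat d n} (hρ : IsState d n ρ)
    (hzm : ZeroMean d n ρ) (m : ℕ) :
    ((boxPow d n s t ρ m) * meanState d n ρ).trace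
      = (((Sfin ρ).card : ℂ)) * ((d : ℂ) ^ n)⁻¹ := by
  rw [meanState_eq hd hzm, Matrix.mul_smul, Matrix.trace_smul, smul_eq_mul, Matrix.mul_sum,
    Matrix.trace_sum]
  have h1 : ∀ x ∈ Sfin ρ, ((boxPow d n s t ρ m) * weylP d n x).trace = 1 := by
    intro x hx
    have h2 : charFun d n (boxPow d n s t ρ m) (-x) = 1 :=
      charFun_boxPow_one hd hst hρ hzm m (neg_mem_Sfin hd hρ hzm hx)
    rw [charFun, neg_neg] at h2
    exact h2
  rw [Finset.sum_congr rfl h1, Finset.sum_const, nsmul_eq_mul, mul_one]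
  ring

lemma proj_herm [NeZero d] [Fact (Nat.Prime d)] (hd : Odd d) {ρ : Mat d n}
    (hρ : IsState d n ρ) (hzm : ZeroMean d n ρ) :
    (((((Sfin ρ).card : ℂ)) * ((d : ℂ) ^ n)⁻¹)⁻¹ • meanState d n ρ)ᴴ
      = ((((Sfin ρ).card : ℂ)) * ((d : ℂ) ^ n)⁻¹)⁻¹ • meanState d n ρ := by
  rw [Matrix.conjTranspose_smul, (meanState_isHermitian hd hρ hzm).eq]
  congr 1
  rw [star_inv₀, star_mul', star_inv₀, star_pow]
  norm_cast

lemma proj_idem [NeZero d] [Fact (Nat.Prime d)] (hd : Odd d) {ρ : Mat d n}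
    (hρ : IsState d n ρ) (hzm : ZeroMean d n ρ) :
    (((((Sfin ρ).card : ℂ)) * ((d : ℂ) ^ n)⁻¹)⁻¹ • meanState d n ρ)
        * (((((Sfin ρ).card : ℂ)) * ((d : ℂ) ^ n)⁻¹)⁻¹ • meanState d n ρ)
      = ((((Sfin ρ).card : ℂ)) * ((d : ℂ) ^ n)⁻¹)⁻¹ • meanState d n ρ := by
  rw [Matrix.smul_mul, Matrix.mul_smul, meanState_sq hd hρ hzm, smul_smul, smul_smul]
  congr 1
  have hγ := gammac_ne_zero hρ
  rw [mul_assoc, inv_mul_cancel₀ hγ, mul_one]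

lemma meanState_mul_proj [NeZero d] [Fact (Nat.Prime d)] (hd : Odd d) {ρ : Mat d n}
    (hρ : IsState d n ρ) (hzm : ZeroMean d n ρ) :
    meanState d n ρ * (((((Sfin ρ).card : ℂ)) * ((d : ℂ) ^ n)⁻¹)⁻¹ • meanState d n ρ)
      = meanState d n ρ := by
  rw [Matrix.mul_smul, meanState_sq hd hρ hzm, smul_smul,
    inv_mul_cancel₀ (gammac_ne_zero hρ), one_smul]

lemma proj_mul_meanState [NeZero d] [Fact (Nat.Prime d)] (hd : Odd d) {ρ : Mat d n}
    (hρ : IsState d n ρ) (hzm : ZeroMean d n ρ) :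
    (((((Sfin ρ).card : ℂ)) * ((d : ℂ) ^ n)⁻¹)⁻¹ • meanState d n ρ) * meanState d n ρ
      = meanState d n ρ := by
  rw [Matrix.smul_mul, meanState_sq hd hρ hzm, smul_smul,
    inv_mul_cancel₀ (gammac_ne_zero hρ), one_smul]

lemma boxPow_mul_proj [NeZero d] [Fact (Nat.Prime d)] (hd : Odd d)
    {s t : ZMod d} (hst : s ^ 2 + t ^ 2 = 1) {ρ : Mat d n} (hρ : IsState d n ρ)
    (hzm : ZeroMean d n ρ) (m : ℕ) :
    (boxPow d n s t ρ m) * (((((Sfin ρ).card : ℂ)) * ((d : ℂ) ^ n)⁻¹)⁻¹ • meanState d n ρ)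
      = boxPow d n s t ρ m := by
  have hσ := boxPow_isState hd hst hρ m
  apply state_absorb_proj hσ.1 hσ.2 (proj_herm hd hρ hzm) (proj_idem hd hρ hzm)
  rw [Matrix.mul_smul, Matrix.trace_smul, smul_eq_mul,
    trace_boxPow_mul_meanState hd hst hρ hzm m, inv_mul_cancel₀ (gammac_ne_zero hρ)]

lemma proj_mul_boxPow [NeZero d] [Fact (Nat.Prime d)] (hd : Odd d)
    {s t : ZMod d} (hst : s ^ 2 + t ^ 2 = 1) {ρ : Mat d n} (hρ : IsState d n ρ)
    (hzm : ZeroMean d n ρ) (m : ℕ) :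
    (((((Sfin ρ).card : ℂ)) * ((d : ℂ) ^ n)⁻¹)⁻¹ • meanState d n ρ) * (boxPow d n s t ρ m)
      = boxPow d n s t ρ m := by
  have hσ := (boxPow_isState hd hst hρ m).1.1.eq
  have h1 := congrArg Matrix.conjTranspose (boxPow_mul_proj hd hst hρ hzm m)
  rwa [Matrix.conjTranspose_mul, proj_herm hd hρ hzm, hσ] at h1

lemma rank_boxPow_sub_meanState_le [NeZero d] [Fact (Nat.Prime d)] (hd : Odd d)
    {s t : ZMod d} (hst : s ^ 2 + t ^ 2 = 1) {ρ : Mat d n} (hρ : IsState d n ρ)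
    (hzm : ZeroMean d n ρ) (m : ℕ) :
    (boxPow d n s t ρ m - meanState d n ρ).rank ≤ mrank d n ρ := by
  set Pi := ((((Sfin ρ).card : ℂ)) * ((d : ℂ) ^ n)⁻¹)⁻¹ • meanState d n ρ with hPidef
  have hA : boxPow d n s t ρ m - meanState d n ρ
      = Pi * ((boxPow d n s t ρ m - meanState d n ρ) * Pi) := by
    rw [Matrix.sub_mul, Matrix.mul_sub, boxPow_mul_proj hd hst hρ hzm m,
      meanState_mul_proj hd hρ hzm, proj_mul_boxPow hd hst hρ hzm m,
      proj_mul_meanState hd hρ hzm]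
  have hA2 : boxPow d n s t ρ m - meanState d n ρ
      = meanState d n ρ * (((((Sfin ρ).card : ℂ)) * ((d : ℂ) ^ n)⁻¹)⁻¹
          • ((boxPow d n s t ρ m - meanState d n ρ) * Pi)) := by
    rw [Matrix.mul_smul, ← Matrix.smul_mul, ← hPidef, ← hA]
  calc (boxPow d n s t ρ m - meanState d n ρ).rank
      = (meanState d n ρ * (((((Sfin ρ).card : ℂ)) * ((d : ℂ) ^ n)⁻¹)⁻¹
          • ((boxPow d n s t ρ m - meanState d n ρ) * Pi))).rank := by rw [← hA2]
    _ ≤ (meanState d n ρ).rank := Matrix.rank_mul_le_left _ _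
    _ = mrank d n ρ := rfl

lemma frob_eval [NeZero d] [Fact (Nat.Prime d)] (hd : Odd d)
    {s t : ZMod d} (hst : s ^ 2 + t ^ 2 = 1) {ρ : Mat d n} (hρ : IsState d n ρ)
    (hzm : ZeroMean d n ρ) (m : ℕ) :
    (((boxPow d n s t ρ m - meanState d n ρ)ᴴ * (boxPow d n s t ρ m - meanState d n ρ)).trace).re
      = ((d : ℝ) ^ n)⁻¹ * ∑ x ∈ (Sfin ρ)ᶜ,
          Complex.normSq (charFun d n (boxPow d n s t ρ m) x) := by
  have hAH : (boxPow d n s t ρ m - meanState d n ρ).IsHermitian :=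
    ((boxPow_isState hd hst hρ m).1.1).sub (meanState_isHermitian hd hρ hzm)
  rw [hAH.eq, trace_sq_eq_sum_normSq hd hAH, Complex.ofReal_re]
  congr 1
  rw [show (∑ x : PhSp d n, Complex.normSq
        (charFun d n (boxPow d n s t ρ m - meanState d n ρ) x))
      = ∑ x ∈ (Finset.univ : Finset (PhSp d n)), Complex.normSq
        (charFun d n (boxPow d n s t ρ m - meanState d n ρ) x) from rfl]
  rw [← Finset.sum_subset (Finset.subset_univ ((Sfin ρ)ᶜ))]
  · apply Finset.sum_congr rfl
    intro x hx
    have hxn : x ∉ Sfin ρ := Finset.mem_compl.mp hx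
    rw [charFun_sub, charFun_meanState_eq hd,
      if_neg (fun hc => hxn (mem_Sfin_iff.mpr hc)), sub_zero]
  · intro x _ hxc
    have hxS : x ∈ Sfin ρ := by
      by_contra hc
      exact hxc (Finset.mem_compl.mpr hc)
    rw [charFun_sub, charFun_meanState_eq hd, if_pos (mem_Sfin_iff.mp hxS),
      charFun_boxPow_one hd hst hρ hzm m hxS, charFun_one_of_mem hd hzm hxS, sub_self]
    simp

lemma purity_eval [NeZero d] (hd : Odd d) {ρ : Mat d n} (hρ : IsState d n ρ) :
    purity ρ = ((d : ℝ) ^ n)⁻¹ * (((Sfin ρ).card : ℝ)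
      + ∑ x ∈ (Sfin ρ)ᶜ, Complex.normSq (charFun d n ρ x)) := by
  rw [purity, trace_sq_eq_sum_normSq hd hρ.1.1, Complex.ofReal_re]
  congr 1
  rw [← Finset.sum_add_sum_compl (Sfin ρ) (fun x => Complex.normSq (charFun d n ρ x))]
  congr 1
  have h1 : ∀ x ∈ Sfin ρ, Complex.normSq (charFun d n ρ x) = 1 := by
    intro x hx
    rw [Complex.normSq_eq_norm_sq, mem_Sfin_iff.mp hx, one_pow]
  rw [Finset.sum_congr rfl h1, Finset.sum_const, nsmul_eq_mul, mul_one]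

lemma sum_compl_reindex [NeZero d] [Fact (Nat.Prime d)] (hd : Odd d) {ρ : Mat d n}
    (hρ : IsState d n ρ) (hzm : ZeroMean d n ρ) {a : ZMod d} (ha : a ≠ 0) :
    ∑ x ∈ (Sfin ρ)ᶜ, Complex.normSq (charFun d n ρ (sdot a x))
      = ∑ x ∈ (Sfin ρ)ᶜ, Complex.normSq (charFun d n ρ x) := by
  apply Finset.sum_nbij' (fun x => sdot a x) (fun x => sdot a⁻¹ x)
  · intro x hx
    exact Finset.mem_compl.mpr (sdot_not_mem_Sfin hd hρ hzm ha (Finset.mem_compl.mp hx))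
  · intro x hx
    exact Finset.mem_compl.mpr
      (sdot_not_mem_Sfin hd hρ hzm (inv_ne_zero ha) (Finset.mem_compl.mp hx))
  · intro x _
    rw [sdot_sdot, inv_mul_cancel₀ ha, sdot_one]
  · intro x _
    rw [sdot_sdot, mul_inv_cancel₀ ha, sdot_one]
  · intro x _
    rfl

end Support

/-- **Trace-distance quantum CLT.** -/
theorem qCLT_traceDistance (d n : ℕ) [Fact (Nat.Prime d)] (hd : Odd d) (hn : 1 ≤ n)
    (s t : ZMod d) (hs : s ≠ 0) (ht : t ≠ 0) (hst : s ^ 2 + t ^ 2 = 1)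
    (ρ : Mat d n) (hρ : IsState d n ρ) (hzm : ZeroMean d n ρ) (N : ℕ) (hN : 1 ≤ N) :
    traceNorm (boxPow d n s t ρ (N - 1) - meanState d n ρ) ≤
      Real.sqrt 2 * (1 - magicGap d n ρ) ^ (N - 1) *
        Real.sqrt (purity ρ * (mrank d n ρ : ℝ) - 1) := by
  set m := N - 1 with hm
  set σ := boxPow d n s t ρ m with hσdef
  set A := σ - meanState d n ρ with hAdef
  set g := 1 - magicGap d n ρ with hg
  set R := mrank d n ρ with hR
  have hg0 : 0 ≤ g := one_sub_magicGap_nonneg ρ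
  have hd0 : (0:ℝ) < (d:ℝ) := by exact_mod_cast (Fact.out (p := d.Prime)).pos
  have hrank : A.rank ≤ R := rank_boxPow_sub_meanState_le hd hst hρ hzm m
  have step1 : traceNorm A ≤ Real.sqrt R * Real.sqrt (((Aᴴ * A).trace).re) :=
    traceNorm_le_sqrt_rank A hrank
  have step2 : ((Aᴴ * A).trace).re
      = ((d:ℝ)^n)⁻¹ * ∑ x ∈ (Sfin ρ)ᶜ, Complex.normSq (charFun d n σ x) :=
    frob_eval hd hst hρ hzm m
  have step3 : (∑ x ∈ (Sfin ρ)ᶜ, Complex.normSq (charFun d n σ x))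
      ≤ (g ^ m)^2 * ∑ x ∈ (Sfin ρ)ᶜ, Complex.normSq (charFun d n ρ x) := by
    have hb : ∀ x ∈ (Sfin ρ)ᶜ, Complex.normSq (charFun d n σ x)
        ≤ (g^m)^2 * Complex.normSq (charFun d n ρ (sdot (s^m) x)) := by
      intro x hx
      have hd1 := charFun_boxPow_decay hd hs ht hst hρ hzm m (Finset.mem_compl.mp hx)
      have hd2 := pow_le_pow_left₀ (norm_nonneg _) hd1 2
      rw [mul_pow] at hd2
      rw [Complex.normSq_eq_norm_sq, Complex.normSq_eq_norm_sq]
      exact hd2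
    calc (∑ x ∈ (Sfin ρ)ᶜ, Complex.normSq (charFun d n σ x))
        ≤ ∑ x ∈ (Sfin ρ)ᶜ, (g^m)^2 * Complex.normSq (charFun d n ρ (sdot (s^m) x)) :=
          Finset.sum_le_sum hb
      _ = (g^m)^2 * ∑ x ∈ (Sfin ρ)ᶜ, Complex.normSq (charFun d n ρ (sdot (s^m) x)) := by
          rw [Finset.mul_sum]
      _ = (g^m)^2 * ∑ x ∈ (Sfin ρ)ᶜ, Complex.normSq (charFun d n ρ x) := by
          rw [sum_compl_reindex hd hρ hzm (pow_ne_zero m hs)]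
  set c2 := ∑ x ∈ (Sfin ρ)ᶜ, Complex.normSq (charFun d n ρ x) with hc2
  have hc2nn : 0 ≤ c2 := Finset.sum_nonneg (fun x _ => Complex.normSq_nonneg _)
  set y := ((d:ℝ)^n)⁻¹ * c2 with hy
  have hdpn : (0:ℝ) < (d:ℝ)^n := pow_pos hd0 n
  have step4 : ((Aᴴ * A).trace).re ≤ (g^m)^2 * y := by
    rw [step2, hy]
    calc ((d:ℝ)^n)⁻¹ * (∑ x ∈ (Sfin ρ)ᶜ, Complex.normSq (charFun d n σ x))
        ≤ ((d:ℝ)^n)⁻¹ * ((g^m)^2 * c2) := by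
          apply mul_le_mul_of_nonneg_left step3 (by positivity)
      _ = (g^m)^2 * (((d:ℝ)^n)⁻¹ * c2) := by ring
  have step5 : Real.sqrt (((Aᴴ * A).trace).re) ≤ g^m * Real.sqrt y := by
    calc Real.sqrt (((Aᴴ * A).trace).re) ≤ Real.sqrt ((g^m)^2 * y) := Real.sqrt_le_sqrt step4
      _ = g^m * Real.sqrt y := by
          rw [Real.sqrt_mul (sq_nonneg _), Real.sqrt_sq (pow_nonneg hg0 m)]
  have hpur : purity ρ = ((d:ℝ)^n)⁻¹ * ((Sfin ρ).card : ℝ) + y := by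
    rw [purity_eval hd hρ, hy, hc2]
    ring
  have hγR : (R : ℝ) * (((Sfin ρ).card : ℝ) * (((d:ℝ)^n)⁻¹)) = 1 := by
    have h := mrank_mul_gamma hd hρ hzm
    have h2 : (((R : ℝ) * (((Sfin ρ).card : ℝ) * (((d:ℝ)^n)⁻¹))) : ℂ) = (1 : ℂ) := by
      push_cast
      exact_mod_cast h
    exact_mod_cast h2
  have hRy : (R:ℝ) * y = purity ρ * (R:ℝ) - 1 := by
    linear_combination (-(R:ℝ)) * hpur - hγR
  have hRfinal : Real.sqrt (R : ℝ) * Real.sqrt y = Real.sqrt (purity ρ * (R:ℝ) - 1) := by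
    rw [← Real.sqrt_mul (Nat.cast_nonneg R) y, hRy]
  have main : traceNorm A ≤ g^m * Real.sqrt (purity ρ * (R:ℝ) - 1) := by
    calc traceNorm A ≤ Real.sqrt R * Real.sqrt (((Aᴴ*A).trace).re) := step1
      _ ≤ Real.sqrt R * (g^m * Real.sqrt y) :=
          mul_le_mul_of_nonneg_left step5 (Real.sqrt_nonneg _)
      _ = g^m * (Real.sqrt R * Real.sqrt y) := by ring
      _ = g^m * Real.sqrt (purity ρ * (R:ℝ) - 1) := by rw [hRfinal]
  have hsqrt2 : (1:ℝ) ≤ Real.sqrt 2 := by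
    rw [show (1:ℝ) = Real.sqrt 1 by rw [Real.sqrt_one]]
    exact Real.sqrt_le_sqrt (by norm_num)
  calc traceNorm A ≤ g^m * Real.sqrt (purity ρ * (R:ℝ) - 1) := main
    _ = 1 * (g^m * Real.sqrt (purity ρ * (R:ℝ) - 1)) := by ring
    _ ≤ Real.sqrt 2 * (g^m * Real.sqrt (purity ρ * (R:ℝ) - 1)) := by
        apply mul_le_mul_of_nonneg_right hsqrt2
        exact mul_nonneg (pow_nonneg hg0 m) (Real.sqrt_nonneg _)
    _ = Real.sqrt 2 * g^m * Real.sqrt (purity ρ * (R:ℝ) - 1) := by ring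

end QW
end
end

section
/- Convolutional strong subadditivity for diagonal states: let d be an odd prime and s,t,l,m ∈ ℤ_d ∖ {0} satisfy s² + t² ≡ 1, s ≡ t, l² + m² ≡ 1, and m ≡ l·s (mod d). If ρ, σ, τ are n-qudit states that are all diagonal in the computational basis, then S((ρ ⊠_{s,t} τ) ⊠_{l,m} σ) + S(σ) ≤ S(ρ ⊠_{s,t} σ) + S(σ ⊠_{s,t} τ). -/
open scoped BigOperators ENNReal
open Classical Matrix ComplexOrder

noncomputable section

namespace QW

section Aux

/-- entropy of a mass function on a finite type -/
def entFun {ι : Type*} [Fintype ι] (p : ι → ℝ) : ℝ := ∑ i, Real.negMulLog (p i)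

lemma entFun_comp_equiv {ι κ : Type*} [Fintype ι] [Fintype κ] (e : κ ≃ ι) (p : ι → ℝ) :
    entFun (fun k => p (e k)) = entFun p :=
  Fintype.sum_equiv e _ _ (fun _ => rfl)

lemma gibbs {ι : Type*} [Fintype ι] (a b : ι → ℝ) (ha : ∀ i, 0 ≤ a i) (hb : ∀ i, 0 ≤ b i)
    (hab : ∀ i, b i = 0 → a i = 0) (hs : ∑ i, b i ≤ ∑ i, a i) :
    ∑ i, Real.negMulLog (a i) ≤ ∑ i, -(a i * Real.log (b i)) := by
  have key : ∀ i, a i * Real.log (b i) - a i * Real.log (a i) ≤ b i - a i := by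
    intro i
    rcases eq_or_lt_of_le (ha i) with h0 | hpos
    · simp [← h0, hb i]
    · have hbpos : 0 < b i := by
        rcases eq_or_lt_of_le (hb i) with h0' | h' 
        · exact absurd (hab i h0'.symm) hpos.ne'
        · exact h'
      have hlog := Real.log_le_sub_one_of_pos (div_pos hbpos hpos)
      rw [Real.log_div (ne_of_gt hbpos) (ne_of_gt hpos)] at hlog
      have := mul_le_mul_of_nonneg_left hlog (le_of_lt hpos)
      calc a i * Real.log (b i) - a i * Real.log (a i)
          = a i * (Real.log (b i) - Real.log (a i)) := by ring
        _ ≤ a i * (b i / a i - 1) := this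
        _ = b i - a i := by field_simp
  have hsum : ∑ i, (a i * Real.log (b i) - a i * Real.log (a i)) ≤ ∑ i, (b i - a i) :=
    Finset.sum_le_sum (fun i _ => key i)
  rw [Finset.sum_sub_distrib, Finset.sum_sub_distrib] at hsum
  have : ∑ i, Real.negMulLog (a i) = -∑ i, a i * Real.log (a i) := by
    rw [← Finset.sum_neg_distrib]
    exact Finset.sum_congr rfl (fun i _ => by simp [Real.negMulLog]; try ring)
  rw [this]
  have : ∑ i, -(a i * Real.log (b i)) = -∑ i, a i * Real.log (b i) := by
    rw [← Finset.sum_neg_distrib]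
  rw [this]
  linarith [hs, hsum]




lemma nml (x : ℝ) : Real.negMulLog x = -(x * Real.log x) := by
  simp [Real.negMulLog]

lemma sum_rot {A B C M : Type*} [Fintype A] [Fintype B] [Fintype C] [AddCommMonoid M]
    (f : A → B → C → M) :
    ∑ a, ∑ b, ∑ c, f a b c = ∑ c, ∑ a, ∑ b, f a b c :=
  (Finset.sum_congr rfl fun _ _ => Finset.sum_comm).trans Finset.sum_comm

lemma submod {A B C : Type*} [Fintype A] [Fintype B] [Fintype C] (π : A → B → C → ℝ)
    (hπ : ∀ a b c, 0 ≤ π a b c) :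
    (∑ c, Real.negMulLog (∑ a, ∑ b, π a b c)) + ∑ a, ∑ b, ∑ c, Real.negMulLog (π a b c) ≤
      (∑ a, ∑ c, Real.negMulLog (∑ b, π a b c)) +
        ∑ b, ∑ c, Real.negMulLog (∑ a, π a b c) := by
  set pAC : A → C → ℝ := fun a c => ∑ b, π a b c with hpAC
  set pBC : B → C → ℝ := fun b c => ∑ a, π a b c with hpBC
  set pC : C → ℝ := fun c => ∑ a, ∑ b, π a b c with hpC
  have hpACnn : ∀ a c, 0 ≤ pAC a c := fun a c => Finset.sum_nonneg fun b _ => hπ a b c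
  have hpBCnn : ∀ b c, 0 ≤ pBC b c := fun b c => Finset.sum_nonneg fun a _ => hπ a b c
  have hpCnn : ∀ c, 0 ≤ pC c := fun c => Finset.sum_nonneg fun a _ => hpACnn a c
  have hAC_le_C : ∀ a c, pAC a c ≤ pC c := fun a c =>
    Finset.single_le_sum (f := fun a => pAC a c) (fun a _ => hpACnn a c) (Finset.mem_univ a)
  have hle_AC : ∀ a b c, π a b c ≤ pAC a c := fun a b c =>
    Finset.single_le_sum (f := fun b => π a b c) (fun b _ => hπ a b c) (Finset.mem_univ b)
  have hle_BC : ∀ a b c, π a b c ≤ pBC b c := fun a b c =>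
    Finset.single_le_sum (f := fun a => π a b c) (fun a _ => hπ a b c) (Finset.mem_univ a)
  set β : A × B × C → ℝ := fun x => pAC x.1 x.2.2 * pBC x.2.1 x.2.2 / pC x.2.2 with hβ
  have hβnn : ∀ x, 0 ≤ β x := fun x =>
    div_nonneg (mul_nonneg (hpACnn _ _) (hpBCnn _ _)) (hpCnn _)
  -- absolute continuity
  have hac : ∀ x : A × B × C, β x = 0 → π x.1 x.2.1 x.2.2 = 0 := by
    rintro ⟨a, b, c⟩ h0
    by_contra hne
    have hpos : 0 < π a b c := lt_of_le_of_ne (hπ a b c) (Ne.symm hne)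
    have h1 : 0 < pAC a c := lt_of_lt_of_le hpos (hle_AC a b c)
    have h2 : 0 < pBC b c := lt_of_lt_of_le hpos (hle_BC a b c)
    have h3 : 0 < pC c := lt_of_lt_of_le h1 (hAC_le_C a c)
    have : 0 < β (a, b, c) := div_pos (mul_pos h1 h2) h3
    simp only [h0, lt_irrefl] at this
  -- total mass comparison
  have hmass : ∑ x : A × B × C, β x ≤ ∑ x : A × B × C, π x.1 x.2.1 x.2.2 := by
    simp only [Fintype.sum_prod_type]
    have lhs_eq : ∀ c : C, (∑ a, ∑ b, β (a, b, c)) = if pC c = 0 then 0 else pC c := by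
      intro c
      by_cases h0 : pC c = 0
      · simp only [h0, if_true]
        have hz : ∀ a, pAC a c = 0 := by
          intro a
          exact le_antisymm (h0 ▸ hAC_le_C a c) (hpACnn a c)
        refine Finset.sum_eq_zero fun a _ => Finset.sum_eq_zero fun b _ => ?_
        simp [hβ, hz a]
      · simp only [h0, if_false]
        have : (∑ a, ∑ b, β (a, b, c)) = (∑ a, pAC a c) * (∑ b, pBC b c) / pC c := by
          rw [Finset.sum_mul, Finset.sum_div]
          refine Finset.sum_congr rfl fun a _ => ?_
          rw [Finset.mul_sum, Finset.sum_div]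
        rw [this]
        have hsum1 : (∑ a, pAC a c) = pC c := rfl
        have hsum2 : (∑ b, pBC b c) = pC c := Finset.sum_comm
        rw [hsum1, hsum2]
        field_simp
    have rhs_eq : ∀ c : C, (∑ a, ∑ b, π a b c) = pC c := fun c => rfl
    calc (∑ a, ∑ b, ∑ c, β (a, b, c)) = ∑ c, ∑ a, ∑ b, β (a, b, c) := sum_rot _
      _ ≤ ∑ c, pC c := by
          refine Finset.sum_le_sum fun c _ => ?_
          rw [lhs_eq c]
          split_ifs with h
          · rw [h]
          · exact le_refl _
      _ = ∑ a, ∑ b, ∑ c, π a b c := (sum_rot _).symm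
  have main := gibbs (fun x : A × B × C => π x.1 x.2.1 x.2.2) β
    (fun x => hπ _ _ _) hβnn hac hmass
  have E1 : ∑ x : A × B × C, Real.negMulLog (π x.1 x.2.1 x.2.2)
      = ∑ a, ∑ b, ∑ c, Real.negMulLog (π a b c) := by
    simp only [Fintype.sum_prod_type]
  have hpt : ∀ a b c, -(π a b c * Real.log (β (a, b, c)))
      = -(π a b c * Real.log (pAC a c)) - π a b c * Real.log (pBC b c)
        + π a b c * Real.log (pC c) := by
    intro a b c
    by_cases h0 : π a b c = 0
    · simp [h0]
    · have hpos : 0 < π a b c := lt_of_le_of_ne (hπ a b c) (Ne.symm h0)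
      have h1 : 0 < pAC a c := lt_of_lt_of_le hpos (hle_AC a b c)
      have h2 : 0 < pBC b c := lt_of_lt_of_le hpos (hle_BC a b c)
      have h3 : 0 < pC c := lt_of_lt_of_le h1 (hAC_le_C a c)
      have hlog : Real.log (β (a, b, c))
          = Real.log (pAC a c) + Real.log (pBC b c) - Real.log (pC c) := by
        show Real.log (pAC a c * pBC b c / pC c) = _
        rw [Real.log_div (by positivity) h3.ne', Real.log_mul h1.ne' h2.ne']
      rw [hlog]; ring
  have C1 : ∑ a, ∑ b, ∑ c, -(π a b c * Real.log (pAC a c))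
      = ∑ a, ∑ c, Real.negMulLog (pAC a c) := by
    refine Finset.sum_congr rfl fun a _ => ?_
    rw [Finset.sum_comm]
    refine Finset.sum_congr rfl fun c _ => ?_
    rw [nml]
    show ∑ b, -(π a b c * Real.log (pAC a c)) = -((∑ b, π a b c) * Real.log (pAC a c))
    rw [Finset.sum_mul, ← Finset.sum_neg_distrib]
  have C2 : ∑ a, ∑ b, ∑ c, -(π a b c * Real.log (pBC b c))
      = ∑ b, ∑ c, Real.negMulLog (pBC b c) := by
    rw [Finset.sum_comm]
    refine Finset.sum_congr rfl fun b _ => ?_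
    rw [Finset.sum_comm]
    refine Finset.sum_congr rfl fun c _ => ?_
    rw [nml]
    show ∑ a, -(π a b c * Real.log (pBC b c)) = -((∑ a, π a b c) * Real.log (pBC b c))
    rw [Finset.sum_mul, ← Finset.sum_neg_distrib]
  have C3 : ∑ a, ∑ b, ∑ c, π a b c * Real.log (pC c)
      = -∑ c, Real.negMulLog (pC c) := by
    rw [sum_rot, ← Finset.sum_neg_distrib]
    refine Finset.sum_congr rfl fun c _ => ?_
    rw [nml, neg_neg]
    show ∑ a, ∑ b, π a b c * Real.log (pC c) = (∑ a, ∑ b, π a b c) * Real.log (pC c)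
    rw [Finset.sum_mul]
    exact Finset.sum_congr rfl fun a _ => (Finset.sum_mul _ _ _).symm
  have E2 : ∑ x : A × B × C, -(π x.1 x.2.1 x.2.2 * Real.log (β x))
      = (∑ a, ∑ c, Real.negMulLog (pAC a c)) + (∑ b, ∑ c, Real.negMulLog (pBC b c))
        - ∑ c, Real.negMulLog (pC c) := by
    simp only [Fintype.sum_prod_type]
    have : ∀ a b : A × B × C → ℝ, True := fun _ _ => trivial
    calc ∑ a, ∑ b, ∑ c, -(π a b c * Real.log (β (a, b, c)))
        = ∑ a, ∑ b, ∑ c, (-(π a b c * Real.log (pAC a c)) - π a b c * Real.log (pBC b c)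
            + π a b c * Real.log (pC c)) := by
          exact Finset.sum_congr rfl fun a _ => Finset.sum_congr rfl fun b _ =>
            Finset.sum_congr rfl fun c _ => hpt a b c
      _ = (∑ a, ∑ b, ∑ c, -(π a b c * Real.log (pAC a c)))
            - (∑ a, ∑ b, ∑ c, -(π a b c * Real.log (pBC b c))) * 0
            - ∑ a, ∑ b, ∑ c, π a b c * Real.log (pBC b c)
            + ∑ a, ∑ b, ∑ c, π a b c * Real.log (pC c) := by
          simp only [Finset.sum_add_distrib, Finset.sum_sub_distrib]
          ring
      _ = _ := by
          rw [C1, C3]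
          have C2' : ∑ a, ∑ b, ∑ c, π a b c * Real.log (pBC b c)
              = -∑ b, ∑ c, Real.negMulLog (pBC b c) := by
            rw [← C2]
            simp only [← Finset.sum_neg_distrib, neg_neg]
          rw [C2']
          ring
  rw [E1] at main
  rw [E2] at main
  have hpc_eq : ∑ c, Real.negMulLog (∑ a, ∑ b, π a b c) = ∑ c, Real.negMulLog (pC c) := rfl
  linarith [main]

section Conv

variable {G : Type*} [Fintype G] [AddCommGroup G]

def cnv (p q : G → ℝ) : G → ℝ := fun v => ∑ y, p y * q (v - y)



lemma cnv_nonneg {p q : G → ℝ} (hp : ∀ x, 0 ≤ p x) (hq : ∀ x, 0 ≤ q x) (v : G) :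
    0 ≤ cnv p q v :=
  Finset.sum_nonneg fun y _ => mul_nonneg (hp y) (hq _)

lemma sum_cnv (p q : G → ℝ) : ∑ v, cnv p q v = (∑ x, p x) * (∑ x, q x) := by
  simp only [cnv]
  rw [Finset.sum_comm, Finset.sum_mul]
  refine Finset.sum_congr rfl fun y _ => ?_
  rw [← Finset.mul_sum]
  congr 1
  exact Fintype.sum_equiv (Equiv.subRight y) _ _ (fun v => rfl)

lemma cnv_comm (p q : G → ℝ) : cnv p q = cnv q p := by
  funext v
  simp only [cnv]
  refine Fintype.sum_equiv (Equiv.subLeft v) _ _ (fun y => ?_)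
  simp only [Equiv.subLeft_apply, sub_sub_cancel]
  ring

lemma cnv_assoc (p q r : G → ℝ) : cnv (cnv p q) r = cnv p (cnv q r) := by
  funext v
  simp only [cnv]
  calc ∑ y, (∑ x, p x * q (y - x)) * r (v - y)
      = ∑ y, ∑ x, p x * q (y - x) * r (v - y) :=
        Finset.sum_congr rfl fun y _ => Finset.sum_mul _ _ _
    _ = ∑ x, ∑ y, p x * q (y - x) * r (v - y) := Finset.sum_comm
    _ = ∑ x, p x * ∑ z, q z * r (v - x - z) := by
        refine Finset.sum_congr rfl fun x _ => ?_
        rw [Finset.mul_sum]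
        refine (Fintype.sum_equiv (Equiv.addLeft x) _ _ (fun z => ?_)).symm
        simp only [Equiv.coe_addLeft]
        rw [add_sub_cancel_left, sub_add_eq_sub_sub]
        ring

lemma sum_negMulLog_mul {ι : Type*} [Fintype ι] (K : ℝ) (f : ι → ℝ) (hf : ∑ i, f i = 1) :
    ∑ i, Real.negMulLog (K * f i) = Real.negMulLog K + K * entFun f := by
  simp only [Real.negMulLog_mul]
  rw [Finset.sum_add_distrib, ← Finset.sum_mul, hf, one_mul, ← Finset.mul_sum]
  rfl

lemma core (p q r : G → ℝ) (hp : ∀ x, 0 ≤ p x) (hq : ∀ x, 0 ≤ q x) (hr : ∀ x, 0 ≤ r x)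
    (hps : ∑ x, p x = 1) (hqs : ∑ x, q x = 1) (hrs : ∑ x, r x = 1) :
    entFun (cnv (cnv p q) r) + entFun q ≤ entFun (cnv p q) + entFun (cnv q r) := by
  have H := submod (fun a b c : G => p a * q (b - a) * r (c - b))
    (fun a b c => mul_nonneg (mul_nonneg (hp a) (hq _)) (hr _))
  have hc : ∀ (K : ℝ) (b : G), ∑ c, Real.negMulLog (K * r (c - b))
      = Real.negMulLog K + K * entFun r := by
    intro K b
    rw [show (∑ c, Real.negMulLog (K * r (c - b))) = ∑ c, Real.negMulLog (K * r c) from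
      Fintype.sum_equiv (Equiv.subRight b) _ _ (fun c => rfl)]
    exact sum_negMulLog_mul K r hrs
  have hT1 : (∑ c, Real.negMulLog (∑ a, ∑ b, p a * q (b - a) * r (c - b)))
      = entFun (cnv (cnv p q) r) := by
    refine (Fintype.sum_congr _ _ fun c => ?_).symm
    congr 1
    simp only [cnv]
    rw [Finset.sum_comm]
    refine Finset.sum_congr rfl fun b _ => ?_
    rw [Finset.sum_mul]
  have hT2 : (∑ a, ∑ b, ∑ c, Real.negMulLog (p a * q (b - a) * r (c - b)))
      = entFun p + entFun q + entFun r := by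
    have perA : ∀ a : G, (∑ b, ∑ c, Real.negMulLog (p a * q (b - a) * r (c - b)))
        = Real.negMulLog (p a) + p a * entFun q + p a * entFun r := by
      intro a
      have step1 : ∀ b : G, (∑ c, Real.negMulLog (p a * q (b - a) * r (c - b)))
          = Real.negMulLog (p a * q (b - a)) + (p a * q (b - a)) * entFun r :=
        fun b => hc (p a * q (b - a)) b
      rw [Finset.sum_congr rfl fun b _ => step1 b, Finset.sum_add_distrib]
      have e1 : (∑ b, Real.negMulLog (p a * q (b - a)))
          = Real.negMulLog (p a) + p a * entFun q := by
        rw [show (∑ b, Real.negMulLog (p a * q (b - a)))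
            = ∑ b, Real.negMulLog (p a * q b) from
          Fintype.sum_equiv (Equiv.subRight a) _ _ (fun b => rfl)]
        exact sum_negMulLog_mul (p a) q hqs
      have e2 : (∑ b, p a * q (b - a) * entFun r) = p a * entFun r := by
        rw [show (∑ b, p a * q (b - a) * entFun r) = ∑ b, p a * q b * entFun r from
          Fintype.sum_equiv (Equiv.subRight a) _ _ (fun b => rfl)]
        rw [← Finset.sum_mul, ← Finset.mul_sum, hqs, mul_one]
      rw [e1, e2]
    rw [Finset.sum_congr rfl fun a _ => perA a]
    rw [Finset.sum_add_distrib, Finset.sum_add_distrib, ← Finset.sum_mul, ← Finset.sum_mul, hps,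
      one_mul, one_mul]
    rfl
  have hcnvqr : ∑ v, cnv q r v = 1 := by rw [sum_cnv, hqs, hrs, one_mul]
  have hcnvpq : ∑ v, cnv p q v = 1 := by rw [sum_cnv, hps, hqs, one_mul]
  have hT3 : (∑ a, ∑ c, Real.negMulLog (∑ b, p a * q (b - a) * r (c - b)))
      = entFun p + entFun (cnv q r) := by
    have inner : ∀ a c : G, (∑ b, p a * q (b - a) * r (c - b)) = p a * cnv q r (c - a) := by
      intro a c
      rw [show cnv q r (c - a) = ∑ z, q z * r (c - a - z) from rfl, Finset.mul_sum]
      refine (Fintype.sum_equiv (Equiv.addLeft a) _ _ (fun z => ?_)).symm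
      simp only [Equiv.coe_addLeft]
      rw [add_sub_cancel_left, sub_add_eq_sub_sub]
      ring
    have perA : ∀ a : G, (∑ c, Real.negMulLog (∑ b, p a * q (b - a) * r (c - b)))
        = Real.negMulLog (p a) + p a * entFun (cnv q r) := by
      intro a
      rw [Finset.sum_congr rfl fun c _ => by rw [inner a c]]
      rw [show (∑ c, Real.negMulLog (p a * cnv q r (c - a)))
          = ∑ c, Real.negMulLog (p a * cnv q r c) from
        Fintype.sum_equiv (Equiv.subRight a) _ _ (fun c => rfl)]
      exact sum_negMulLog_mul (p a) (cnv q r) hcnvqr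
    rw [Finset.sum_congr rfl fun a _ => perA a, Finset.sum_add_distrib]
    rw [show (∑ a, p a * entFun (cnv q r)) = entFun (cnv q r) from by
      rw [← Finset.sum_mul, hps, one_mul]]
    rfl
  have hT4 : (∑ b, ∑ c, Real.negMulLog (∑ a, p a * q (b - a) * r (c - b)))
      = entFun (cnv p q) + entFun r := by
    have inner : ∀ b c : G, (∑ a, p a * q (b - a) * r (c - b)) = cnv p q b * r (c - b) := by
      intro b c
      rw [show cnv p q b = ∑ y, p y * q (b - y) from rfl, Finset.sum_mul]
    have perB : ∀ b : G, (∑ c, Real.negMulLog (∑ a, p a * q (b - a) * r (c - b)))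
        = Real.negMulLog (cnv p q b) + cnv p q b * entFun r := by
      intro b
      rw [Finset.sum_congr rfl fun c _ => by rw [inner b c]]
      exact hc (cnv p q b) b
    rw [Finset.sum_congr rfl fun b _ => perB b, Finset.sum_add_distrib, ← Finset.sum_mul,
      hcnvpq, one_mul]
    rfl
  rw [hT1, hT2, hT3, hT4] at H
  linarith [H]

end Conv


section MatrixAux

open Polynomial in
lemma charpoly_diagonal' {I : Type} [Fintype I] [DecidableEq I] (v : I → ℂ) :
    (Matrix.diagonal v).charpoly = ∏ i, (X - C (v i)) := by
  have h : (Matrix.diagonal v).charmatrix = Matrix.diagonal fun i => (X : ℂ[X]) - C (v i) := by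
    ext i j
    by_cases hij : i = j
    · subst hij; simp
    · rw [Matrix.charmatrix_apply_ne _ _ _ hij, Matrix.diagonal_apply_ne _ hij,
        Matrix.diagonal_apply_ne _ hij, map_zero, neg_zero]
  rw [Matrix.charpoly, h, Matrix.det_diagonal]

open Polynomial in
lemma charpoly_conj_inv {I : Type} [Fintype I] [DecidableEq I] (U V D : Matrix I I ℂ)
    (hUV : U * V = 1) :
    (U * D * V).charpoly = D.charpoly := by
  set CU := U.map (C : ℂ → ℂ[X]) with hCU
  set CV := V.map (C : ℂ → ℂ[X]) with hCV
  have hCUV : CU * CV = 1 := by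
    rw [hCU, hCV, ← Matrix.map_mul (f := (C : ℂ →+* ℂ[X])), hUV]
    ext i j
    by_cases hij : i = j <;> simp [hij, Matrix.one_apply]
  have key : (U * D * V).charmatrix = CU * D.charmatrix * CV := by
    have hscal : CU * Matrix.scalar I (X : ℂ[X]) * CV = Matrix.scalar I (X : ℂ[X]) := by
      have hcomm : Matrix.scalar I (X : ℂ[X]) * CU = CU * Matrix.scalar I (X : ℂ[X]) :=
        (Matrix.scalar_commute (X : ℂ[X]) (fun r => Commute.all _ _) CU).eq
      rw [← hcomm, mul_assoc, hCUV, mul_one]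
    have hmapped : ((C : ℂ →+* ℂ[X])).mapMatrix (U * D * V)
        = CU * ((C : ℂ →+* ℂ[X])).mapMatrix D * CV := by
      simp only [RingHom.mapMatrix_apply]
      rw [Matrix.map_mul (f := (C : ℂ →+* ℂ[X])), Matrix.map_mul (f := (C : ℂ →+* ℂ[X]))]
    show Matrix.scalar I (X : ℂ[X]) - _ = _
    rw [hmapped, Matrix.charmatrix, mul_sub, sub_mul, hscal]
  rw [Matrix.charpoly, key, Matrix.det_mul, Matrix.det_mul, Matrix.charpoly]
  have hdet : CU.det * CV.det = 1 := by
    rw [← Matrix.det_mul, hCUV, Matrix.det_one]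
  calc CU.det * D.charmatrix.det * CV.det = CU.det * CV.det * D.charmatrix.det := by ring
    _ = D.charmatrix.det := by rw [hdet, one_mul]

open Polynomial in
lemma charpoly_eig {I : Type} [Fintype I] [DecidableEq I] {ρ : Matrix I I ℂ}
    (h : ρ.IsHermitian) :
    ρ.charpoly = ∏ i, (X - C ((h.eigenvalues i : ℝ) : ℂ)) := by
  have hsp := h.spectral_theorem
  have hU : (h.eigenvectorUnitary : Matrix I I ℂ) * star (h.eigenvectorUnitary : Matrix I I ℂ)
      = 1 := (Matrix.mem_unitaryGroup_iff).mp h.eigenvectorUnitary.2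
  calc ρ.charpoly
      = ((h.eigenvectorUnitary : Matrix I I ℂ) *
          Matrix.diagonal (RCLike.ofReal ∘ h.eigenvalues) *
          star (h.eigenvectorUnitary : Matrix I I ℂ)).charpoly := by rw [Unitary.conjStarAlgAut_apply] at hsp; rw [← hsp]
    _ = (Matrix.diagonal (RCLike.ofReal ∘ h.eigenvalues) : Matrix I I ℂ).charpoly :=
        charpoly_conj_inv _ _ _ hU
    _ = ∏ i, (X - C ((h.eigenvalues i : ℝ) : ℂ)) := by
        rw [charpoly_diagonal']
        rfl

open Polynomial in
lemma eig_multiset {I : Type} [Fintype I] [DecidableEq I] {ρ : Matrix I I ℂ}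
    (h : ρ.IsHermitian) (hdiag : ρ.IsDiag) :
    (Finset.univ.val.map fun i => ((h.eigenvalues i : ℝ) : ℂ))
      = Finset.univ.val.map fun k => ρ k k := by
  have hρd : ρ = Matrix.diagonal fun k => ρ k k := by
    ext i j
    by_cases hij : i = j
    · subst hij; simp
    · rw [Matrix.diagonal_apply_ne _ hij]; exact hdiag hij
  have h2 : ρ.charpoly = ∏ k, (X - C (ρ k k)) := by
    conv_lhs => rw [hρd]
    exact charpoly_diagonal' _
  have key : ((Finset.univ.val.map fun i => ((h.eigenvalues i : ℝ) : ℂ)).map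
        fun a => X - C a).prod
      = ((Finset.univ.val.map fun k => ρ k k).map fun a => X - C a).prod := by
    rw [Multiset.map_map, Multiset.map_map]
    rw [← Finset.prod_eq_multiset_prod, ← Finset.prod_eq_multiset_prod]
    exact (charpoly_eig h).symm.trans h2
  have := congrArg Polynomial.roots key
  rwa [roots_multiset_prod_X_sub_C, roots_multiset_prod_X_sub_C] at this

lemma sum_eig_diag {I : Type} [Fintype I] [DecidableEq I] {ρ : Matrix I I ℂ}
    (h : ρ.IsHermitian) (hdiag : ρ.IsDiag) (F : ℂ → ℝ) :
    ∑ i, F ((h.eigenvalues i : ℝ) : ℂ) = ∑ k, F (ρ k k) := by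
  have key := congrArg (fun s : Multiset ℂ => (s.map F).sum) (eig_multiset h hdiag)
  simp only [Multiset.map_map, Function.comp] at key
  rw [Finset.sum_eq_multiset_sum, Finset.sum_eq_multiset_sum]
  exact key

lemma entropy_of_diag {I : Type} [Fintype I] [DecidableEq I] {ρ : Matrix I I ℂ}
    (h : ρ.IsHermitian) (hdiag : ρ.IsDiag) :
    entropy ρ = ∑ k, Real.negMulLog ((ρ k k).re) := by
  rw [entropy, dif_pos h]
  have h1 : -∑ i, h.eigenvalues i * Real.log (h.eigenvalues i)
      = ∑ i, Real.negMulLog (h.eigenvalues i) := by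
    rw [← Finset.sum_neg_distrib]
    exact Finset.sum_congr rfl fun i _ => by rw [nml]
  rw [h1]
  have h2 := sum_eig_diag h hdiag (fun z => Real.negMulLog z.re)
  simp only [Complex.ofReal_re] at h2
  exact h2

end MatrixAux

section QconvAux

lemma qconv_of_diag (d n : ℕ) [NeZero d] (s t : ZMod d) (hst : s * s + t * t = 1)
    (p q : Idx d n → ℝ) (ρ σ : Mat d n)
    (hρ : ρ = Matrix.diagonal fun k => ((p k : ℝ) : ℂ))
    (hσ : σ = Matrix.diagonal fun k => ((q k : ℝ) : ℂ)) :
    qconv d n s t ρ σ = Matrix.diagonal fun a =>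
      ((∑ b, p (s • a - t • b) * q (t • a + s • b) : ℝ) : ℂ) := by
  have hcomb : ∀ x : Idx d n, (s * s) • x + (t * t) • x = x := by
    intro x
    rw [← add_smul, hst, one_smul]
  have left_inv : ∀ γ : PhSp d n,
      (s • (s • γ.1 + t • γ.2) - t • (-(t • γ.1) + s • γ.2),
        t • (s • γ.1 + t • γ.2) + s • (-(t • γ.1) + s • γ.2)) = γ := by
    rintro ⟨x, y⟩
    have h1 : s • (s • x + t • y) - t • (-(t • x) + s • y) = x := by
      simp only [smul_add, smul_neg, smul_smul]
      match_scalars <;> first | ring1 | linear_combination hst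
    have h2 : t • (s • x + t • y) + s • (-(t • x) + s • y) = y := by
      simp only [smul_add, smul_neg, smul_smul]
      match_scalars <;> first | ring1 | linear_combination hst
    exact Prod.ext h1 h2
  have right_inv : ∀ α : PhSp d n,
      (s • (s • α.1 - t • α.2) + t • (t • α.1 + s • α.2),
        -(t • (s • α.1 - t • α.2)) + s • (t • α.1 + s • α.2)) = α := by
    rintro ⟨x, y⟩
    have h1 : s • (s • x - t • y) + t • (t • x + s • y) = x := by
      simp only [smul_add, smul_sub, smul_smul]
      match_scalars <;> first | ring1 | linear_combination hst
    have h2 : -(t • (s • x - t • y)) + s • (t • x + s • y) = y := by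
      simp only [smul_add, smul_sub, smul_smul]
      match_scalars <;> first | ring1 | linear_combination hst
    exact Prod.ext h1 h2
  set e : PhSp d n ≃ PhSp d n :=
    { toFun := fun γ => (s • γ.1 + t • γ.2, -(t • γ.1) + s • γ.2)
      invFun := fun α => (s • α.1 - t • α.2, t • α.1 + s • α.2)
      left_inv := fun γ => left_inv γ
      right_inv := fun α => right_inv α } with he
  have hU : ∀ a b : PhSp d n, convU d n s t a b = if a = e b then 1 else 0 := by
    intro a b
    simp only [convU, Matrix.of_apply]
    by_cases hc : a = e b
    · rw [if_pos hc, if_pos]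
      exact ⟨by rw [hc]; rfl, by rw [hc]; rfl⟩
    · rw [if_neg hc, if_neg]
      intro h
      exact hc (Prod.ext h.1 h.2)
  have hUM : ∀ (M : Matrix (PhSp d n) (PhSp d n) ℂ) (α δ : PhSp d n),
      (convU d n s t * M) α δ = M (e.symm α) δ := by
    intro M α δ
    rw [Matrix.mul_apply]
    have : ∀ γ, convU d n s t α γ * M γ δ = if e.symm α = γ then M γ δ else 0 := by
      intro γ
      rw [hU]
      by_cases hγ : e.symm α = γ
      · rw [if_pos hγ, if_pos, one_mul]
        rw [← hγ, Equiv.apply_symm_apply]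
      · rw [if_neg hγ, if_neg, zero_mul]
        intro hc
        exact hγ (by rw [hc, Equiv.symm_apply_apply])
    rw [Finset.sum_congr rfl fun γ _ => this γ]
    simp
  have hMU : ∀ (M : Matrix (PhSp d n) (PhSp d n) ℂ) (α δ : PhSp d n),
      (M * (convU d n s t)ᴴ) α δ = M α (e.symm δ) := by
    intro M α δ
    rw [Matrix.mul_apply]
    have : ∀ γ, M α γ * (convU d n s t)ᴴ γ δ = if e.symm δ = γ then M α γ else 0 := by
      intro γ
      rw [Matrix.conjTranspose_apply, hU]
      by_cases hγ : e.symm δ = γ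
      · rw [if_pos hγ, if_pos, star_one, mul_one]
        rw [← hγ, Equiv.apply_symm_apply]
      · rw [if_neg hγ, if_neg, star_zero, mul_zero]
        intro hc
        exact hγ (by rw [hc, Equiv.symm_apply_apply])
    rw [Finset.sum_congr rfl fun γ _ => this γ]
    simp
  have hK : ∀ x y : PhSp d n, kron d n ρ σ x y
      = (if x.1 = y.1 then ((p x.1 : ℝ) : ℂ) else 0) *
        (if x.2 = y.2 then ((q x.2 : ℝ) : ℂ) else 0) := by
    intro x y
    show ρ x.1 y.1 * σ x.2 y.2 = _
    rw [hρ, hσ, Matrix.diagonal_apply, Matrix.diagonal_apply]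
  have hconv : ∀ a a' : Idx d n, qconv d n s t ρ σ a a'
      = ∑ b, kron d n ρ σ (e.symm (a, b)) (e.symm (a', b)) := by
    intro a a'
    show (∑ b, (convU d n s t * kron d n ρ σ * (convU d n s t)ᴴ) (a, b) (a', b)) = _
    refine Finset.sum_congr rfl fun b _ => ?_
    rw [hMU, hUM]
  ext a a'
  by_cases haa : a = a'
  · subst haa
    rw [hconv, Matrix.diagonal_apply_eq]
    push_cast
    refine Finset.sum_congr rfl fun b _ => ?_
    rw [hK]
    have h1 : (e.symm (a, b)).1 = s • a - t • b := rfl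
    have h2 : (e.symm (a, b)).2 = t • a + s • b := rfl
    rw [if_pos rfl, if_pos rfl, h1, h2]
  · rw [hconv, Matrix.diagonal_apply_ne _ haa]
    refine Finset.sum_eq_zero fun b _ => ?_
    rw [hK]
    have hne : e.symm (a, b) ≠ e.symm (a', b) := by
      intro hc
      exact haa (congrArg Prod.fst (e.symm.injective hc))
    by_cases h1 : (e.symm (a, b)).1 = (e.symm (a', b)).1
    · have h2 : (e.symm (a, b)).2 ≠ (e.symm (a', b)).2 := by
        intro h2
        exact hne (Prod.ext h1 h2)
      rw [if_neg h2, mul_zero]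
    · rw [if_neg h1, zero_mul]

end QconvAux

section FinalAux

def smulEquiv (d n : ℕ) [NeZero d] [Fact (Nat.Prime d)] (c : ZMod d) (hc : c ≠ 0) :
    Idx d n ≃ Idx d n where
  toFun := fun x => c • x
  invFun := fun x => c⁻¹ • x
  left_inv := fun x => by show c⁻¹ • c • x = x; rw [smul_smul, inv_mul_cancel₀ hc, one_smul]
  right_inv := fun x => by show c • c⁻¹ • x = x; rw [smul_smul, mul_inv_cancel₀ hc, one_smul]

lemma pattern_sum (d n : ℕ) [NeZero d] [Fact (Nat.Prime d)] (F Q : Idx d n → ℝ)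
    (c₁ c₂ c₃ : ZMod d) (hc₂ : c₂ ≠ 0) (a : Idx d n) :
    ∑ b, F (c₁ • a - c₂ • b) * Q (c₃ • a + c₂ • b) = cnv F Q ((c₁ + c₃) • a) := by
  have step1 : ∑ b, F (c₁ • a - c₂ • b) * Q (c₃ • a + c₂ • b)
      = ∑ y, F (c₁ • a - y) * Q (c₃ • a + y) :=
    Fintype.sum_equiv (smulEquiv d n c₂ hc₂) _ _ (fun b => rfl)
  rw [step1]
  show _ = ∑ z, F z * Q ((c₁ + c₃) • a - z)
  refine (Fintype.sum_equiv (Equiv.subLeft (c₁ • a)) _ _ (fun z => ?_)).symm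
  simp only [Equiv.subLeft_apply, sub_sub_cancel]
  congr 2
  rw [add_smul]
  abel

lemma entdiag (d n : ℕ) [NeZero d] (f : Idx d n → ℝ) :
    entropy (Matrix.diagonal fun a : Idx d n => ((f a : ℝ) : ℂ))
      = ∑ a, Real.negMulLog (f a) := by
  have hherm : (Matrix.diagonal fun a : Idx d n => ((f a : ℝ) : ℂ)).IsHermitian := by
    have : (Matrix.diagonal fun a : Idx d n => ((f a : ℝ) : ℂ))ᴴ
        = Matrix.diagonal fun a : Idx d n => ((f a : ℝ) : ℂ) := by
      have hstar : (star fun a : Idx d n => ((f a : ℝ) : ℂ))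
          = fun a : Idx d n => ((f a : ℝ) : ℂ) := funext fun a => Complex.conj_ofReal _
      rw [Matrix.diagonal_conjTranspose, hstar]
    exact this
  rw [entropy_of_diag hherm (Matrix.isDiag_diagonal _)]
  refine Finset.sum_congr rfl fun a _ => ?_
  rw [Matrix.diagonal_apply_eq, Complex.ofReal_re]

lemma state_repr (d n : ℕ) [NeZero d] (A : Mat d n) (hA : IsState d n A) (hAd : A.IsDiag) :
    A = Matrix.diagonal (fun k => (((A k k).re : ℝ) : ℂ)) := by
  ext i j
  by_cases hij : i = j
  · subst hij
    rw [Matrix.diagonal_apply_eq]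
    have hstar : star (A i i) = A i i := by
      have := congrFun (congrFun hA.1.1 i) i
      rwa [Matrix.conjTranspose_apply] at this
    have him : (A i i).im = 0 := Complex.conj_eq_iff_im.mp hstar
    exact (Complex.ext (Complex.ofReal_re _) (by simp [him])).symm
  · rw [Matrix.diagonal_apply_ne _ hij]
    exact hAd hij

lemma state_diag_nonneg (d n : ℕ) [NeZero d] (A : Mat d n) (hA : IsState d n A) (k : Idx d n) :
    0 ≤ (A k k).re := by
  have h2 := (Matrix.posSemidef_iff_dotProduct_mulVec.mp hA.1).2 (Pi.single k 1)
  have heq : dotProduct (star (Pi.single k 1)) (A *ᵥ Pi.single k 1) = A k k := by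
    simp [dotProduct, Matrix.mulVec, Pi.single_apply]
  rw [heq] at h2
  exact (Complex.le_def.mp h2).1

lemma state_diag_sum (d n : ℕ) [NeZero d] (A : Mat d n) (hA : IsState d n A) :
    ∑ k, (A k k).re = 1 := by
  have htr : (A.trace).re = 1 := by rw [hA.2]; exact Complex.one_re
  rw [Matrix.trace] at htr
  rw [← htr]
  rw [Complex.re_sum]
  rfl

end FinalAux

end Aux

/-- **Convolutional strong subadditivity for diagonal states.** If `ρ, σ, τ` are
diagonal in the computational basis, then
`S((ρ ⊠_{s,t} τ) ⊠_{l,m} σ) + S(σ) ≤ S(ρ ⊠_{s,t} σ) + S(σ ⊠_{s,t} τ)`,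
where `s² + t² ≡ 1`, `s ≡ t`, `l² + m² ≡ 1`, `m ≡ l·s (mod d)`. -/
theorem convSSA_diagonal (d n : ℕ) [Fact (Nat.Prime d)] (hd : Odd d) (hn : 1 ≤ n)
    (s t l m : ZMod d) (hs : s ≠ 0) (ht : t ≠ 0) (hl : l ≠ 0) (hm : m ≠ 0)
    (hst : s ^ 2 + t ^ 2 = 1) (hseqt : s = t)
    (hlm : l ^ 2 + m ^ 2 = 1) (hmls : m = l * s)
    (ρ σ τ : Mat d n) (hρ : IsState d n ρ) (hσ : IsState d n σ) (hτ : IsState d n τ)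
    (hρd : ρ.IsDiag) (hσd : σ.IsDiag) (hτd : τ.IsDiag) :
    entropy (qconv d n l m (qconv d n s t ρ τ) σ) + entropy σ ≤
      entropy (qconv d n s t ρ σ) + entropy (qconv d n s t σ τ) := by
  classical
  haveI : NeZero d := ⟨(Fact.out : Nat.Prime d).ne_zero⟩
  subst hseqt
  subst hmls
  set p : Idx d n → ℝ := fun k => (ρ k k).re with hpdef
  set q : Idx d n → ℝ := fun k => (σ k k).re with hqdef
  set r : Idx d n → ℝ := fun k => (τ k k).re with hrdef
  have hρrep : ρ = Matrix.diagonal (fun k => ((p k : ℝ) : ℂ)) := state_repr d n ρ hρ hρd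
  have hσrep : σ = Matrix.diagonal (fun k => ((q k : ℝ) : ℂ)) := state_repr d n σ hσ hσd
  have hτrep : τ = Matrix.diagonal (fun k => ((r k : ℝ) : ℂ)) := state_repr d n τ hτ hτd
  have hpnn : ∀ k, 0 ≤ p k := state_diag_nonneg d n ρ hρ
  have hqnn : ∀ k, 0 ≤ q k := state_diag_nonneg d n σ hσ
  have hrnn : ∀ k, 0 ≤ r k := state_diag_nonneg d n τ hτ
  have hps : ∑ k, p k = 1 := state_diag_sum d n ρ hρ
  have hqs : ∑ k, q k = 1 := state_diag_sum d n σ hσ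
  have hrs : ∑ k, r k = 1 := state_diag_sum d n τ hτ
  have hss : s * s + s * s = 1 := by linear_combination hst
  have h2s : (s + s) * s = 1 := by linear_combination hst
  have hss_ne : s + s ≠ 0 := fun h => by
    rw [h, zero_mul] at h2s; exact zero_ne_one h2s
  have hll : l * l + l * s * (l * s) = 1 := by linear_combination hlm
  have hb : (s + s) * (l * s) = l := by linear_combination l * hst
  have h3m : ((s + s) * l + l * s) * (l * s) = 1 := by linear_combination (l * l) * hst + hlm
  have h3m_ne : (s + s) * l + l * s ≠ 0 := fun h => by
    rw [h, zero_mul] at h3m; exact zero_ne_one h3m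
  have hAdiag : qconv d n s s ρ τ
      = Matrix.diagonal (fun a => ((cnv p r ((s + s) • a) : ℝ) : ℂ)) := by
    rw [qconv_of_diag d n s s hss p r ρ τ hρrep hτrep]
    exact congrArg Matrix.diagonal (funext fun a => by rw [pattern_sum d n p r s s s hs a])
  have hρσdiag : qconv d n s s ρ σ
      = Matrix.diagonal (fun a => ((cnv p q ((s + s) • a) : ℝ) : ℂ)) := by
    rw [qconv_of_diag d n s s hss p q ρ σ hρrep hσrep]
    exact congrArg Matrix.diagonal (funext fun a => by rw [pattern_sum d n p q s s s hs a])
  have hστdiag : qconv d n s s σ τ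
      = Matrix.diagonal (fun a => ((cnv q r ((s + s) • a) : ℝ) : ℂ)) := by
    rw [qconv_of_diag d n s s hss q r σ τ hσrep hτrep]
    exact congrArg Matrix.diagonal (funext fun a => by rw [pattern_sum d n q r s s s hs a])
  have hBdiag : qconv d n l (l * s) (qconv d n s s ρ τ) σ
      = Matrix.diagonal
          (fun a => ((cnv (cnv p r) q (((s + s) * l + l * s) • a) : ℝ) : ℂ)) := by
    rw [qconv_of_diag d n l (l * s) hll (fun a => cnv p r ((s + s) • a)) q
      (qconv d n s s ρ τ) σ hAdiag hσrep]
    refine congrArg Matrix.diagonal (funext fun a => ?_)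
    have harg : ∀ b : Idx d n, cnv p r ((s + s) • (l • a - (l * s) • b))
        = cnv p r (((s + s) * l) • a - l • b) := by
      intro b
      congr 1
      rw [smul_sub, smul_smul, smul_smul, hb]
    rw [Finset.sum_congr rfl fun b _ => by rw [harg b]]
    rw [pattern_sum d n (cnv p r) q ((s + s) * l) l (l * s) hl a]
  have hrein : ∀ (f : Idx d n → ℝ) (c : ZMod d), c ≠ 0 →
      (∑ a, Real.negMulLog (f (c • a))) = entFun f := by
    intro f c hc
    exact Fintype.sum_equiv (smulEquiv d n c hc) _ _ (fun a => rfl)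
  have entB : entropy (qconv d n l (l * s) (qconv d n s s ρ τ) σ)
      = entFun (cnv (cnv p r) q) := by
    rw [hBdiag, entdiag d n]
    exact hrein (cnv (cnv p r) q) ((s + s) * l + l * s) h3m_ne
  have entρσ : entropy (qconv d n s s ρ σ) = entFun (cnv p q) := by
    rw [hρσdiag, entdiag d n]
    exact hrein (cnv p q) (s + s) hss_ne
  have entστ : entropy (qconv d n s s σ τ) = entFun (cnv q r) := by
    rw [hστdiag, entdiag d n]
    exact hrein (cnv q r) (s + s) hss_ne
  have entσ2 : entropy σ = entFun q := by
    conv_lhs => rw [hσrep]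
    rw [entdiag d n]
    rfl
  have key := core p q r hpnn hqnn hrnn hps hqs hrs
  have hcnveq : cnv (cnv p r) q = cnv (cnv p q) r := by
    rw [cnv_assoc, cnv_comm r q, ← cnv_assoc]
  rw [entB, entσ2, entρσ, entστ, hcnveq]
  linarith [key]


end QW
end
end

section
/- No subadditivity or superadditivity of entropy under quantum convolution: for every odd prime d and every n ≥ 1, (1) there exist n-qudit states ρ, σ with S(ρ ⊠ σ) > S(ρ) + S(σ) — indeed ρ the projection onto |0⟩^{⊗n} and σ the projection onto the uniform superposition d^{−n/2} Σ_{k⃗∈ℤ_d^n} |k⃗⟩ satisfy S(ρ) = S(σ) = 0 and ρ ⊠ σ = d^{−n} I, so S(ρ ⊠ σ) = n log d; and (2) there exist n-qudit states ρ, σ with S(ρ ⊠ σ) < S(ρ) + S(σ) — indeed ρ = σ = d^{−n} I satisfy S(ρ ⊠ σ) = n log d < 2n log d. -/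
open scoped BigOperators ENNReal
open Classical Matrix ComplexOrder

noncomputable section

namespace QW


/-! ### Auxiliary lemmas -/

lemma eigen_idem {I : Type} [Fintype I] [DecidableEq I] {ρ : Matrix I I ℂ}
    (h : ρ.IsHermitian) (hi : ρ * ρ = ρ) (i : I) :
    h.eigenvalues i = 0 ∨ h.eigenvalues i = 1 := by
  have hv := h.mulVec_eigenvectorBasis i
  have hne : ⇑(h.eigenvectorBasis i) ≠ 0 := by
    have := h.eigenvectorBasis.orthonormal.ne_zero i
    intro hc; apply this; ext j; exact congrFun hc j
  have h2 : (ρ * ρ) *ᵥ ⇑(h.eigenvectorBasis i)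
      = (h.eigenvalues i * h.eigenvalues i) • ⇑(h.eigenvectorBasis i) := by
    rw [← Matrix.mulVec_mulVec, hv, Matrix.mulVec_smul, hv, smul_smul]
  rw [hi, hv] at h2
  have h3 : (h.eigenvalues i * h.eigenvalues i - h.eigenvalues i) •
      ⇑(h.eigenvectorBasis i) = 0 := by
    rw [sub_smul, h2, sub_self]
  rcases smul_eq_zero.mp h3 with h4 | h4
  · have : h.eigenvalues i * (h.eigenvalues i - 1) = 0 := by ring_nf; linarith [h4]
    rcases mul_eq_zero.mp this with h5 | h5
    · exact Or.inl h5
    · exact Or.inr (by linarith)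
  · exact absurd h4 hne

lemma eigen_smul_one {I : Type} [Fintype I] [DecidableEq I] {c : ℝ}
    (h : ((c : ℂ) • (1 : Matrix I I ℂ)).IsHermitian) (i : I) : h.eigenvalues i = c := by
  have hv := h.mulVec_eigenvectorBasis i
  have hne : ⇑(h.eigenvectorBasis i) ≠ 0 := by
    have := h.eigenvectorBasis.orthonormal.ne_zero i
    intro hc; apply this; ext j; exact congrFun hc j
  have h2 : ((c : ℂ) • (1 : Matrix I I ℂ)) *ᵥ ⇑(h.eigenvectorBasis i)
      = c • ⇑(h.eigenvectorBasis i) := by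
    rw [Matrix.smul_mulVec, Matrix.one_mulVec]
    ext j
    simp [Complex.real_smul]
  rw [h2] at hv
  have h3 : ((c : ℝ) - h.eigenvalues i) • ⇑(h.eigenvectorBasis i) = 0 := by
    rw [sub_smul, hv, sub_self]
  rcases smul_eq_zero.mp h3 with h4 | h4
  · linarith [sub_eq_zero.mp h4]
  · exact absurd h4 hne

lemma entropy_of_proj {I : Type} [Fintype I] [DecidableEq I] {ρ : Matrix I I ℂ}
    (h : ρ.IsHermitian) (hi : ρ * ρ = ρ) : entropy ρ = 0 := by
  simp only [entropy]
  rw [dif_pos h, neg_eq_zero]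
  refine Finset.sum_eq_zero fun i _ => ?_
  rcases eigen_idem h hi i with h0 | h0 <;> simp [h0]

lemma isHermitian_scalar {I : Type} [Fintype I] [DecidableEq I] (c : ℝ) :
    ((c : ℂ) • (1 : Matrix I I ℂ)).IsHermitian := by
  ext x y
  by_cases h : y = x
  · subst h
    simp [Matrix.conjTranspose_apply, Matrix.smul_apply, Matrix.one_apply]
  · simp [Matrix.conjTranspose_apply, Matrix.smul_apply, Matrix.one_apply, h, Ne.symm h]

lemma entropy_scalar {I : Type} [Fintype I] [DecidableEq I] (c : ℝ) :
    entropy ((c : ℂ) • (1 : Matrix I I ℂ))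
      = -((Fintype.card I : ℝ) * (c * Real.log c)) := by
  have hH := isHermitian_scalar (I := I) c
  simp only [entropy]
  rw [dif_pos hH]
  rw [Finset.sum_congr rfl (fun i _ => by rw [eigen_smul_one hH i])]
  simp [Finset.card_univ, mul_comm]

lemma pinv_iff {d n : ℕ} [NeZero d] {s t : ZMod d} (hst : s ^ 2 + t ^ 2 = 1)
    (x z : PhSp d n) :
    (x.1 = s • z.1 + t • z.2 ∧ x.2 = -(t • z.1) + s • z.2) ↔
      z = (s • x.1 - t • x.2, t • x.1 + s • x.2) := by
  rw [Prod.ext_iff]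
  constructor
  · rintro ⟨h1, h2⟩
    rw [h1, h2]
    constructor <;> funext i <;>
      simp only [Pi.smul_apply, Pi.add_apply, Pi.sub_apply, Pi.neg_apply, smul_eq_mul]
    · linear_combination (-(z.1 i)) * hst
    · linear_combination (-(z.2 i)) * hst
  · rintro ⟨h1, h2⟩
    rw [h1, h2]
    constructor <;> funext i <;>
      simp only [Pi.smul_apply, Pi.add_apply, Pi.sub_apply, Pi.neg_apply, smul_eq_mul]
    · linear_combination (-(x.1 i)) * hst
    · linear_combination (-(x.2 i)) * hst

lemma convU_apply_eq {d n : ℕ} [NeZero d] {s t : ZMod d} (hst : s ^ 2 + t ^ 2 = 1)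
    (x z : PhSp d n) :
    convU d n s t x z = if z = (s • x.1 - t • x.2, t • x.1 + s • x.2) then 1 else 0 := by
  simp only [convU, Matrix.of_apply, pinv_iff hst]

lemma convU_conj_apply {d n : ℕ} [NeZero d] {s t : ZMod d} (hst : s ^ 2 + t ^ 2 = 1)
    (M : Matrix (Idx d n × Idx d n) (Idx d n × Idx d n) ℂ) (x x' : PhSp d n) :
    (convU d n s t * M * (convU d n s t)ᴴ) x x' =
      M (s • x.1 - t • x.2, t • x.1 + s • x.2)
        (s • x'.1 - t • x'.2, t • x'.1 + s • x'.2) := by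
  simp only [Matrix.mul_apply, Matrix.conjTranspose_apply, convU_apply_eq hst,
    apply_ite (star : ℂ → ℂ), star_one, star_zero, ite_mul, mul_ite, one_mul, mul_one,
    zero_mul, mul_zero, Finset.sum_ite_eq', Finset.mem_univ, if_true]

lemma qconv_proj_unif {d n : ℕ} [Fact (Nat.Prime d)] {s t : ZMod d}
    (hs : s ≠ 0) (ht : t ≠ 0) (hst : s ^ 2 + t ^ 2 = 1) :
    qconv d n s t (Matrix.of fun x y => if x = 0 ∧ y = 0 then 1 else 0)
        (Matrix.of fun _ _ => ((d : ℂ) ^ n)⁻¹)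
      = ((d : ℂ) ^ n)⁻¹ • (1 : Mat d n) := by
  have key : ∀ (u b : Idx d n), (s • u - t • b = 0) ↔ (b = t⁻¹ • (s • u)) := by
    intro u b
    rw [sub_eq_zero]
    constructor
    · intro h; rw [h, inv_smul_smul₀ ht]
    · intro h; rw [h, smul_inv_smul₀ ht]
  ext a a'
  simp only [qconv, Matrix.of_apply, convU_conj_apply hst, kron, Matrix.smul_apply,
    Matrix.one_apply, smul_eq_mul, key]
  by_cases hA : a = a'
  · subst hA
    simp [Finset.sum_ite_eq', and_self]
  · rw [if_neg hA, mul_zero]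
    refine Finset.sum_eq_zero fun b _ => ?_
    rw [if_neg, zero_mul]
    rintro ⟨h1, h2⟩
    apply hA
    have h3 : t⁻¹ • (s • a) = t⁻¹ • (s • a') := by rw [← h1, ← h2]
    rw [smul_smul, smul_smul] at h3
    exact smul_right_injective (Idx d n)
      (mul_ne_zero (inv_ne_zero ht) hs) h3

lemma qconv_unif_unif {d n : ℕ} [Fact (Nat.Prime d)] {s t : ZMod d}
    (hs : s ≠ 0) (ht : t ≠ 0) (hst : s ^ 2 + t ^ 2 = 1) :
    qconv d n s t (((d : ℂ) ^ n)⁻¹ • (1 : Mat d n)) (((d : ℂ) ^ n)⁻¹ • (1 : Mat d n))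
      = ((d : ℂ) ^ n)⁻¹ • (1 : Mat d n) := by
  have hdn0 : ((d : ℂ) ^ n) ≠ 0 := by
    exact pow_ne_zero _ (Nat.cast_ne_zero.mpr (NeZero.ne d))
  ext a a'
  simp only [qconv, Matrix.of_apply, convU_conj_apply hst, kron, Matrix.smul_apply,
    Matrix.one_apply, smul_eq_mul]
  have c1 : ∀ b : Idx d n, (s • a - t • b = s • a' - t • b) ↔ a = a' := by
    intro b
    rw [sub_left_inj]
    constructor
    · intro h; exact smul_right_injective (Idx d n) hs h
    · intro h; rw [h]
  have c2 : ∀ b : Idx d n, (t • a + s • b = t • a' + s • b) ↔ a = a' := by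
    intro b
    rw [add_left_inj]
    constructor
    · intro h; exact smul_right_injective (Idx d n) ht h
    · intro h; rw [h]
  simp only [c1, c2]
  by_cases hA : a = a'
  · rw [if_pos hA]
    simp only [if_pos hA, mul_ite, mul_one, mul_zero]
    rw [Finset.sum_const, Finset.card_univ]
    have hcard : (Fintype.card (Idx d n) : ℂ) = (d : ℂ) ^ n := by
      rw [Fintype.card_fun, ZMod.card, Fintype.card_fin]; push_cast; ring
    rw [nsmul_eq_mul, hcard]
    field_simp
  · simp [hA]

lemma card_idx (d n : ℕ) [NeZero d] : Fintype.card (Idx d n) = d ^ n := by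
  rw [Fintype.card_fun, ZMod.card, Fintype.card_fin]

set_option maxHeartbeats 1000000 in
/-- **No subadditivity or superadditivity of entropy under quantum convolution.**
(1) With `ρ₀` the projection onto `|0⟩^{⊗n}` and `σ₀` the projection onto the uniform
superposition, `S(ρ₀) = S(σ₀) = 0`, `ρ₀ ⊠ σ₀ = d^{-n} I` and `S(ρ₀ ⊠ σ₀) = n log d`,
so `S(ρ₀ ⊠ σ₀) > S(ρ₀) + S(σ₀)`; in particular such states exist.
(2) With `μ = d^{-n} I`, `S(μ ⊠ μ) = n log d < 2 n log d = S(μ) + S(μ)`;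
in particular such states exist. -/
theorem no_subadditivity (d n : ℕ) [Fact (Nat.Prime d)] (hd : Odd d) (hn : 1 ≤ n)
    (s t : ZMod d) (hs : s ≠ 0) (ht : t ≠ 0) (hst : s ^ 2 + t ^ 2 = 1) :
    let ρ₀ : Mat d n := Matrix.of fun x y => if x = 0 ∧ y = 0 then 1 else 0
    let σ₀ : Mat d n := Matrix.of fun _ _ => ((d : ℂ) ^ n)⁻¹
    let μ : Mat d n := ((d : ℂ) ^ n)⁻¹ • (1 : Mat d n)
    entropy ρ₀ = 0 ∧ entropy σ₀ = 0 ∧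
    qconv d n s t ρ₀ σ₀ = μ ∧
    entropy (qconv d n s t ρ₀ σ₀) = n * Real.log d ∧
    entropy ρ₀ + entropy σ₀ < entropy (qconv d n s t ρ₀ σ₀) ∧
    (∃ ρ σ : Mat d n, IsState d n ρ ∧ IsState d n σ ∧
      entropy ρ + entropy σ < entropy (qconv d n s t ρ σ)) ∧
    entropy μ = n * Real.log d ∧
    entropy (qconv d n s t μ μ) = n * Real.log d ∧
    entropy (qconv d n s t μ μ) < entropy μ + entropy μ ∧
    (∃ ρ σ : Mat d n, IsState d n ρ ∧ IsState d n σ ∧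
      entropy (qconv d n s t ρ σ) < entropy ρ + entropy σ) := by
  intro ρ₀ σ₀ μ
  have hd2 : 2 ≤ d := (Fact.out : Nat.Prime d).two_le
  have hdR1 : (1 : ℝ) < (d : ℝ) := by exact_mod_cast hd2
  have hdnR : (0 : ℝ) < (d : ℝ) ^ n := by positivity
  have hdn0 : ((d : ℂ) ^ n) ≠ 0 :=
    pow_ne_zero _ (Nat.cast_ne_zero.mpr (NeZero.ne d))
  -- ρ₀ is a Hermitian projection
  have hρH : ρ₀.IsHermitian := by
    ext x y
    simp only [ρ₀, Matrix.conjTranspose_apply, Matrix.of_apply,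
      apply_ite (star : ℂ → ℂ), star_one, star_zero]
    exact if_congr and_comm rfl rfl
  have hρI : ρ₀ * ρ₀ = ρ₀ := by
    ext x y
    simp only [ρ₀, Matrix.mul_apply, Matrix.of_apply]
    rw [Finset.sum_eq_single (0 : Idx d n)]
    · by_cases hx : x = 0 <;> by_cases hy : y = 0 <;> simp [hx, hy]
    · intro k _ hk; simp [hk]
    · intro h; exact absurd (Finset.mem_univ _) h
  -- σ₀ is a Hermitian projection
  have hσH : σ₀.IsHermitian := by
    ext x y
    simp only [σ₀, Matrix.conjTranspose_apply, Matrix.of_apply, star_inv₀, star_pow]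
    norm_cast
  have hσI : σ₀ * σ₀ = σ₀ := by
    ext x y
    simp only [σ₀, Matrix.mul_apply, Matrix.of_apply]
    rw [Finset.sum_const, Finset.card_univ]
    have hcard : (Fintype.card (Idx d n) : ℂ) = (d : ℂ) ^ n := by
      rw [card_idx]; push_cast; ring
    rw [nsmul_eq_mul, hcard]
    field_simp
  -- μ as a real scalar matrix
  have hcast : ((((d : ℝ) ^ n)⁻¹ : ℝ) : ℂ) = ((d : ℂ) ^ n)⁻¹ := by
    push_cast; ring
  have hrw : μ = (((((d : ℝ) ^ n)⁻¹ : ℝ)) : ℂ) • (1 : Mat d n) := by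
    rw [hcast]
  have hμent : entropy μ = n * Real.log d := by
    rw [hrw, entropy_scalar, card_idx]
    rw [Real.log_inv, Real.log_pow]
    push_cast
    field_simp
  have hconv1 : qconv d n s t ρ₀ σ₀ = μ := qconv_proj_unif hs ht hst
  have hconv2 : qconv d n s t μ μ = μ := qconv_unif_unif hs ht hst
  have hρe : entropy ρ₀ = 0 := entropy_of_proj hρH hρI
  have hσe : entropy σ₀ = 0 := entropy_of_proj hσH hσI
  have hpos : (0 : ℝ) < n * Real.log d := by
    have := Real.log_pos hdR1
    have hn' : (0 : ℝ) < n := by exact_mod_cast hn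
    positivity
  -- states
  have hρS : IsState d n ρ₀ := by
    constructor
    · refine Matrix.PosSemidef.of_dotProduct_mulVec_nonneg hρH fun v => ?_
      have hmv : ρ₀ *ᵥ v = fun x => if x = 0 then v 0 else 0 := by
        funext x
        simp only [ρ₀, Matrix.mulVec, Matrix.of_apply, dotProduct]
        rw [Finset.sum_eq_single (0 : Idx d n)]
        · by_cases hx : x = 0 <;> simp [hx]
        · intro k _ hk; simp [hk]
        · intro h; exact absurd (Finset.mem_univ _) h
      rw [hmv]
      have : (star v) ⬝ᵥ (fun x => if x = 0 then v 0 else 0) = star (v 0) * v 0 := by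
        simp only [dotProduct, Pi.star_apply, mul_ite, mul_zero]
        rw [Finset.sum_ite_eq' Finset.univ (0 : Idx d n)]
        simp
      rw [this]
      exact star_mul_self_nonneg _
    · simp only [ρ₀, Matrix.trace, Matrix.diag, Matrix.of_apply, and_self]
      rw [Finset.sum_ite_eq' Finset.univ (0 : Idx d n)]
      simp
  have hcardC : (Fintype.card (Idx d n) : ℂ) = (d : ℂ) ^ n := by
    rw [card_idx]; push_cast; ring
  have hσS : IsState d n σ₀ := by
    constructor
    · refine Matrix.PosSemidef.of_dotProduct_mulVec_nonneg hσH fun v => ?_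
      have hmv : σ₀ *ᵥ v = fun _ => ((d : ℂ) ^ n)⁻¹ * ∑ y, v y := by
        funext x
        simp only [σ₀, Matrix.mulVec, Matrix.of_apply, dotProduct]
        rw [← Finset.mul_sum]
      rw [hmv]
      have : (star v) ⬝ᵥ (fun _ => ((d : ℂ) ^ n)⁻¹ * ∑ y, v y)
          = ((d : ℂ) ^ n)⁻¹ * (star (∑ y, v y) * (∑ y, v y)) := by
        simp only [dotProduct, Pi.star_apply]
        rw [← Finset.sum_mul, ← star_sum]
        ring
      rw [this]
      refine mul_nonneg ?_ (star_mul_self_nonneg _)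
      rw [← hcast]
      rw [Complex.zero_le_real]
      positivity
    · simp only [σ₀, Matrix.trace, Matrix.diag, Matrix.of_apply]
      rw [Finset.sum_const, Finset.card_univ, nsmul_eq_mul, hcardC]
      field_simp
  have hμS : IsState d n μ := by
    constructor
    · refine Matrix.PosSemidef.of_dotProduct_mulVec_nonneg (by rw [hrw]; exact isHermitian_scalar _) fun v => ?_
      have hmv : μ *ᵥ v = ((d : ℂ) ^ n)⁻¹ • v := by
        simp only [μ, Matrix.smul_mulVec, Matrix.one_mulVec]
      rw [hmv, dotProduct_smul]
      rw [← hcast]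
      rw [smul_eq_mul]
      refine mul_nonneg ?_ ?_
      · rw [Complex.zero_le_real]; positivity
      · simp only [dotProduct, Pi.star_apply]
        exact Finset.sum_nonneg fun i _ => star_mul_self_nonneg _
    · simp only [μ, Matrix.trace_smul, Matrix.trace_one, hcardC, smul_eq_mul]
      field_simp
  refine ⟨hρe, hσe, hconv1, ?_, ?_, ?_, hμent, ?_, ?_, ?_⟩
  · rw [hconv1, hμent]
  · rw [hconv1, hμent, hρe, hσe, add_zero]; exact hpos
  · exact ⟨ρ₀, σ₀, hρS, hσS, by rw [hconv1, hμent, hρe, hσe, add_zero]; exact hpos⟩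
  · rw [hconv2, hμent]
  · rw [hconv2, hμent]; linarith
  · exact ⟨μ, μ, hμS, hμS, by rw [hconv2, hμent]; linarith⟩

end QW
end
end
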